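/- arXiv:1309.4298 — 7 statements merged into one kernel-verified Lean document; each statement's English description precedes it below -/
import Mathlib

section
/- The map Π from the set T_ℓ (pairs T ⊗ T' with T ∈ T_ℓ^+, T' ∈ T_0^-, and α_T ≥ β_{T'} - 1) to the set T_{[1,ℓ]} of strictly increasing ℓ-tuples of integers, defined by Π(T ⊗ T') = (j_1 < ⋯ < j_{α_T} < i_{α_T+1} < ⋯ < i_ℓ) where T = (⋯ < i_{ℓ-1} < i_ℓ) and T' = (j_1 < j_2 < ⋯), is a bijection. -/
attribute [local instance] Classical.propDecidable

noncomputable section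

/-- `T_ℓ^+`: strictly increasing integer sequences indexed by `j ≤ ℓ` with `i_j = j`
for `j ≪ 0`. -/
def TPlus (ℓ : ℤ) : Set (Set.Iic ℓ → ℤ) :=
  {f | StrictMono f ∧ ∃ N : ℤ, ∀ j : Set.Iic ℓ, (j : ℤ) ≤ N → f j = (j : ℤ)}

/-- `T_0^-`: strictly increasing integer sequences indexed by `p ≥ 1` with `j_p = p`
for `p ≫ 0`. -/
def TMinus : Set (Set.Ici (1 : ℤ) → ℤ) :=
  {g | StrictMono g ∧ ∃ N : ℤ, ∀ p : Set.Ici (1 : ℤ), N ≤ (p : ℤ) → g p = (p : ℤ)}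

/-- `α_T = sup {p ≤ ℓ : i_p = p}`. -/
def alphaT (ℓ : ℤ) (f : Set.Iic ℓ → ℤ) : ℤ :=
  sSup {p : ℤ | ∃ h : p ≤ ℓ, f ⟨p, h⟩ = p}

/-- `β_{T'} = inf {p ≥ 1 : j_p = p}`. -/
def betaT (g : Set.Ici (1 : ℤ) → ℤ) : ℤ :=
  sInf {p : ℤ | ∃ h : (1 : ℤ) ≤ p, g ⟨p, h⟩ = p}

/-- `T_ℓ`: pairs `T ⊗ T'` with `T ∈ T_ℓ^+`, `T' ∈ T_0^-` and `α_T ≥ β_{T'} − 1`. -/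
-- generic gap lemma
lemma gap_aux {s : Set ℤ} {f : s → ℤ} (hf : StrictMono f) {a b : ℤ} (hab : a ≤ b) :
    ∀ (hs : ∀ x, a ≤ x → x ≤ b → x ∈ s) (ha : a ∈ s) (hb : b ∈ s),
      b - a ≤ f ⟨b, hb⟩ - f ⟨a, ha⟩ := by
  refine Int.le_induction (motive := fun b _ => ∀ (_ : ∀ x, a ≤ x → x ≤ b → x ∈ s)
      (ha : a ∈ s) (hb : b ∈ s), b - a ≤ f ⟨b, hb⟩ - f ⟨a, ha⟩) ?_ ?_ b hab
  · intro _ ha hb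
    have h : f ⟨a, hb⟩ = f ⟨a, ha⟩ := rfl
    omega
  · intro n hn ih hs ha hb
    have hns : n ∈ s := hs n hn (by omega)
    have h1 : f ⟨n, hns⟩ < f ⟨n + 1, hb⟩ := hf (Subtype.mk_lt_mk.mpr (by omega))
    have h2 := ih (fun x hx hx' => hs x hx (by omega)) ha hns
    omega

lemma TPlus.self_le {ℓ : ℤ} {f : Set.Iic ℓ → ℤ} (hf : f ∈ TPlus ℓ)
    (p : ℤ) (hp : p ≤ ℓ) : p ≤ f ⟨p, hp⟩ := by
  obtain ⟨hm, N, hN⟩ := hf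
  have hMp : min N p ≤ p := min_le_right _ _
  have hMl : min N p ≤ ℓ := hMp.trans hp
  have h1 : f ⟨min N p, hMl⟩ = min N p := hN ⟨min N p, hMl⟩ (min_le_left _ _)
  have h2 : p - min N p ≤ f ⟨p, hp⟩ - f ⟨min N p, hMl⟩ :=
    gap_aux hm hMp (fun x _ hx' => Set.mem_Iic.mpr (hx'.trans hp)) hMl hp
  omega

lemma TPlus.alpha_le {ℓ : ℤ} {f : Set.Iic ℓ → ℤ} (hf : f ∈ TPlus ℓ) :
    alphaT ℓ f ≤ ℓ ∧ ∀ p (hp : p ≤ ℓ), (f ⟨p, hp⟩ = p ↔ p ≤ alphaT ℓ f) := by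
  obtain ⟨hm, N, hN⟩ := hf
  set S := {p : ℤ | ∃ h : p ≤ ℓ, f ⟨p, h⟩ = p} with hS
  have hne : min N ℓ ∈ S := ⟨min_le_right _ _, hN _ (min_le_left _ _)⟩
  have hbdd : BddAbove S := ⟨ℓ, fun p hp => hp.1⟩
  have hmem : alphaT ℓ f ∈ S := Int.csSup_mem ⟨_, hne⟩ hbdd
  obtain ⟨hαℓ, hαeq⟩ := hmem
  refine ⟨hαℓ, fun p hp => ⟨fun hfp => le_csSup hbdd ⟨hp, hfp⟩, fun hpα => ?_⟩⟩
  have h2 : alphaT ℓ f - p ≤ f ⟨alphaT ℓ f, hαℓ⟩ - f ⟨p, hp⟩ :=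
    gap_aux hm hpα (fun x _ hx' => Set.mem_Iic.mpr (hx'.trans hαℓ)) hp hαℓ
  have h3 : p ≤ f ⟨p, hp⟩ := TPlus.self_le ⟨hm, N, hN⟩ p hp
  omega

lemma TMinus.le_self {g : Set.Ici (1:ℤ) → ℤ} (hg : g ∈ TMinus)
    (p : ℤ) (hp : (1:ℤ) ≤ p) : g ⟨p, hp⟩ ≤ p := by
  obtain ⟨hm, N, hN⟩ := hg
  have hpM : p ≤ max N p := le_max_right _ _
  have hM1 : (1:ℤ) ≤ max N p := hp.trans hpM
  have h1 : g ⟨max N p, hM1⟩ = max N p := hN ⟨max N p, hM1⟩ (le_max_left _ _)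
  have h2 : max N p - p ≤ g ⟨max N p, hM1⟩ - g ⟨p, hp⟩ :=
    gap_aux hm hpM (fun x hx _ => Set.mem_Ici.mpr (hp.trans hx)) hp hM1
  omega

lemma TMinus.beta_le {g : Set.Ici (1:ℤ) → ℤ} (hg : g ∈ TMinus) :
    1 ≤ betaT g ∧ ∀ p (hp : (1:ℤ) ≤ p), (g ⟨p, hp⟩ = p ↔ betaT g ≤ p) := by
  obtain ⟨hm, N, hN⟩ := hg
  set S := {p : ℤ | ∃ h : (1:ℤ) ≤ p, g ⟨p, h⟩ = p} with hS
  have hne : max N 1 ∈ S := ⟨le_max_right _ _, hN _ (le_max_left _ _)⟩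
  have hbdd : BddBelow S := ⟨1, fun p hp => hp.1⟩
  have hmem : betaT g ∈ S := Int.csInf_mem ⟨_, hne⟩ hbdd
  obtain ⟨hβ1, hβeq⟩ := hmem
  refine ⟨hβ1, fun p hp => ⟨fun hgp => csInf_le hbdd ⟨hp, hgp⟩, fun hβp => ?_⟩⟩
  have h2 : p - betaT g ≤ g ⟨p, hp⟩ - g ⟨betaT g, hβ1⟩ :=
    gap_aux hm hβp (fun x hx _ => Set.mem_Ici.mpr (hβ1.trans hx)) hβ1 hp
  have h3 : g ⟨p, hp⟩ ≤ p := TMinus.le_self ⟨hm, N, hN⟩ p hp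
  omega

def TL (ℓ : ℤ) : Set ((Set.Iic ℓ → ℤ) × (Set.Ici (1 : ℤ) → ℤ)) :=
  {x | x.1 ∈ TPlus ℓ ∧ x.2 ∈ TMinus ∧ betaT x.2 - 1 ≤ alphaT ℓ x.1}

/-- `T_{[1,ℓ]}`: strictly increasing `ℓ`-tuples of integers. -/
def TRect (ℓ : ℤ) : Set (Set.Icc (1 : ℤ) ℓ → ℤ) := {h | StrictMono h}

/-- The map `Π(T ⊗ T') = (j_1 < ⋯ < j_{α_T} < i_{α_T+1} < ⋯ < i_ℓ)`. -/
def PiMap (ℓ : ℤ) (x : (Set.Iic ℓ → ℤ) × (Set.Ici (1 : ℤ) → ℤ)) :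
    Set.Icc (1 : ℤ) ℓ → ℤ :=
  fun p => if (p : ℤ) ≤ alphaT ℓ x.1 then x.2 ⟨p, p.2.1⟩ else x.1 ⟨p, p.2.2⟩

/-- The map `Π : T_ℓ → T_{[1,ℓ]}` is a bijection. -/
theorem PiMap_bijective (ℓ : ℤ) (hl : 1 ≤ ℓ) :
    Set.BijOn (PiMap ℓ) (TL ℓ) (TRect ℓ) := by
  refine ⟨?_, ?_, ?_⟩
  · -- MapsTo
    rintro ⟨f, g⟩ ⟨hf, hg, hαβ⟩
    intro p q hpq
    have hpq' : (p : ℤ) < q := Subtype.coe_lt_coe.mpr hpq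
    show (if (p : ℤ) ≤ alphaT ℓ f then g ⟨p, p.2.1⟩ else f ⟨p, p.2.2⟩)
        < (if (q : ℤ) ≤ alphaT ℓ f then g ⟨q, q.2.1⟩ else f ⟨q, q.2.2⟩)
    by_cases hq : (q : ℤ) ≤ alphaT ℓ f
    · have hp : (p : ℤ) ≤ alphaT ℓ f := le_of_lt (lt_of_lt_of_le hpq' hq)
      rw [if_pos hp, if_pos hq]
      exact hg.1 (Subtype.mk_lt_mk.mpr hpq')
    · by_cases hp : (p : ℤ) ≤ alphaT ℓ f
      · rw [if_pos hp, if_neg hq]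
        have h1 : g ⟨p, p.2.1⟩ ≤ p := TMinus.le_self hg p p.2.1
        have h2 : (q : ℤ) ≤ f ⟨q, q.2.2⟩ := TPlus.self_le hf q q.2.2
        omega
      · rw [if_neg hp, if_neg hq]
        exact hf.1 (Subtype.mk_lt_mk.mpr hpq')
  · -- InjOn
    rintro ⟨f, g⟩ ⟨hf, hg, hαβ⟩ ⟨f', g'⟩ ⟨hf', hg', hαβ'⟩ heq
    obtain ⟨hαℓ, hfiff⟩ := TPlus.alpha_le hf
    obtain ⟨hαℓ', hfiff'⟩ := TPlus.alpha_le hf'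
    obtain ⟨hβ1, hgiff⟩ := TMinus.beta_le hg
    obtain ⟨hβ1', hgiff'⟩ := TMinus.beta_le hg'
    set α := alphaT ℓ f with hα
    set α' := alphaT ℓ f' with hα'
    have hα0 : 0 ≤ α := by omega
    have hα0' : 0 ≤ α' := by omega
    have key : ∀ a b : ℤ, a = alphaT ℓ f → b = alphaT ℓ f' → True := fun _ _ _ _ => trivial
    have hne : ¬ α < α' := by
      intro hlt
      have hp1 : (1:ℤ) ≤ α + 1 := by omega
      have hpl : α + 1 ≤ ℓ := by omega
      have e := congrFun heq ⟨α + 1, hp1, hpl⟩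
      have e2 : (if (α+1 : ℤ) ≤ α then g ⟨α+1, hp1⟩ else f ⟨α+1, hpl⟩)
          = (if (α+1 : ℤ) ≤ α' then g' ⟨α+1, hp1⟩ else f' ⟨α+1, hpl⟩) := e
      rw [if_neg (by omega), if_pos (by omega)] at e2
      have h1 : α + 1 ≤ f ⟨α+1, hpl⟩ := TPlus.self_le hf _ hpl
      have h2 : f ⟨α+1, hpl⟩ ≠ α + 1 := by
        intro hE
        have := (hfiff _ hpl).mp hE
        omega
      have h3 : g' ⟨α+1, hp1⟩ ≤ α + 1 := TMinus.le_self hg' _ hp1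
      omega
    have hne' : ¬ α' < α := by
      intro hlt
      have hp1 : (1:ℤ) ≤ α' + 1 := by omega
      have hpl : α' + 1 ≤ ℓ := by omega
      have e := congrFun heq ⟨α' + 1, hp1, hpl⟩
      have e2 : (if (α'+1 : ℤ) ≤ α then g ⟨α'+1, hp1⟩ else f ⟨α'+1, hpl⟩)
          = (if (α'+1 : ℤ) ≤ α' then g' ⟨α'+1, hp1⟩ else f' ⟨α'+1, hpl⟩) := e
      rw [if_pos (by omega), if_neg (by omega)] at e2
      have h1 : α' + 1 ≤ f' ⟨α'+1, hpl⟩ := TPlus.self_le hf' _ hpl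
      have h2 : f' ⟨α'+1, hpl⟩ ≠ α' + 1 := by
        intro hE
        have := (hfiff' _ hpl).mp hE
        omega
      have h3 : g ⟨α'+1, hp1⟩ ≤ α' + 1 := TMinus.le_self hg _ hp1
      omega
    have hαα' : α = α' := by omega
    obtain rfl : f = f' := by
      funext j
      by_cases hj : (j : ℤ) ≤ α
      · have h1 : f j = (j : ℤ) := (hfiff _ j.2).mpr hj
        have h2 : f' j = (j : ℤ) := (hfiff' _ j.2).mpr (by omega)
        rw [h1, h2]
      · have hj1 : (1:ℤ) ≤ j := by omega
        have e := congrFun heq ⟨(j : ℤ), hj1, j.2⟩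
        have e2 : (if (j : ℤ) ≤ α then g ⟨j, hj1⟩ else f j)
            = (if (j : ℤ) ≤ α' then g' ⟨j, hj1⟩ else f' j) := e
        rw [if_neg hj, if_neg (by omega)] at e2
        exact e2
    obtain rfl : g = g' := by
      funext p
      by_cases hp : (p : ℤ) ≤ α
      · have hpl : (p : ℤ) ≤ ℓ := le_trans hp hαℓ
        have e := congrFun heq ⟨(p : ℤ), p.2, hpl⟩
        have e2 : (if (p : ℤ) ≤ α then g p else f ⟨p, hpl⟩)
            = (if (p : ℤ) ≤ α' then g' p else f ⟨p, hpl⟩) := e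
        rw [if_pos hp, if_pos (by omega)] at e2
        exact e2
      · have h1 : g p = (p : ℤ) := (hgiff _ p.2).mpr (by omega)
        have h2 : g' p = (p : ℤ) := (hgiff' _ p.2).mpr (by omega)
        rw [h1, h2]
    rfl
  · -- SurjOn
    intro h hh
    have hhm : StrictMono h := hh
    set S := insert (0:ℤ) {p : ℤ | ∃ hp : 1 ≤ p ∧ p ≤ ℓ, h ⟨p, hp⟩ ≤ p} with hS
    have h0S : (0:ℤ) ∈ S := Set.mem_insert _ _
    have hbdd : BddAbove S := by
      refine ⟨ℓ, ?_⟩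
      rintro p hp
      rcases Set.mem_insert_iff.mp hp with rfl | ⟨⟨_, h2⟩, _⟩
      · omega
      · exact h2
    set a := sSup S with ha
    have haS : a ∈ S := Int.csSup_mem ⟨0, h0S⟩ hbdd
    have h0a : 0 ≤ a := le_csSup hbdd h0S
    have haℓ : a ≤ ℓ := by
      refine csSup_le ⟨0, h0S⟩ ?_
      rintro p hp
      rcases Set.mem_insert_iff.mp hp with rfl | ⟨⟨_, h2⟩, _⟩
      · omega
      · exact h2
    have hlow : ∀ p (hp1 : 1 ≤ p) (hpa : p ≤ a), h ⟨p, ⟨hp1, hpa.trans haℓ⟩⟩ ≤ p := by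
      intro p hp1 hpa
      rcases Set.mem_insert_iff.mp haS with h0 | ⟨hpair, hha⟩
      · omega
      · have hgap : a - p ≤ h ⟨a, hpair⟩ - h ⟨p, ⟨hp1, hpa.trans haℓ⟩⟩ :=
          gap_aux hhm hpa (fun x hx hx' => ⟨hp1.trans hx, hx'.trans hpair.2⟩)
            ⟨hp1, hpa.trans haℓ⟩ hpair
        omega
    have hhigh : ∀ p (hp1 : 1 ≤ p) (hpl : p ≤ ℓ), a < p → p < h ⟨p, ⟨hp1, hpl⟩⟩ := by
      intro p hp1 hpl hap
      by_contra hcon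
      push_neg at hcon
      have hmem : p ∈ S := Set.mem_insert_iff.mpr (Or.inr ⟨⟨hp1, hpl⟩, hcon⟩)
      have := le_csSup hbdd hmem
      omega
    obtain ⟨f, hfpos, hfneg⟩ : ∃ f : Set.Iic ℓ → ℤ,
        (∀ j : Set.Iic ℓ, (j:ℤ) ≤ a → f j = j) ∧
        (∀ j : Set.Iic ℓ, ¬ ((j:ℤ) ≤ a) → ∀ (hj1 : 1 ≤ (j:ℤ)), f j = h ⟨j, ⟨hj1, j.2⟩⟩) :=
      ⟨fun j => if hc : (j:ℤ) ≤ a then (j:ℤ) else h ⟨(j:ℤ), ⟨by omega, j.2⟩⟩,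
        fun j hj => dif_pos hj, fun j hj hj1 => dif_neg hj⟩
    obtain ⟨g, hgpos, hgneg⟩ : ∃ g : Set.Ici (1:ℤ) → ℤ,
        (∀ p : Set.Ici (1:ℤ), (p:ℤ) ≤ a → ∀ (hpl : (p:ℤ) ≤ ℓ), g p = h ⟨p, ⟨p.2, hpl⟩⟩) ∧
        (∀ p : Set.Ici (1:ℤ), ¬ ((p:ℤ) ≤ a) → g p = p) :=
      ⟨fun p => if hc : (p:ℤ) ≤ a then h ⟨(p:ℤ), ⟨p.2, by omega⟩⟩ else (p:ℤ),
        fun p hp hpl => dif_pos hp, fun p hp => dif_neg hp⟩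
    have hfS : StrictMono f := by
      intro j k hjk
      have hjk' : (j : ℤ) < k := Subtype.coe_lt_coe.mpr hjk
      by_cases hk : (k:ℤ) ≤ a
      · rw [hfpos j (by omega), hfpos k hk]
        exact hjk'
      · have hk1 : (1:ℤ) ≤ k := by omega
        rw [hfneg k hk hk1]
        have h2 := hhigh k hk1 k.2 (by omega)
        by_cases hj : (j:ℤ) ≤ a
        · rw [hfpos j hj]
          omega
        · have hj1 : (1:ℤ) ≤ j := by omega
          rw [hfneg j hj hj1]
          have := hhigh j hj1 j.2 (by omega)
          have hmono : h ⟨(j:ℤ), ⟨hj1, j.2⟩⟩ < h ⟨(k:ℤ), ⟨hk1, k.2⟩⟩ :=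
            hhm (Subtype.mk_lt_mk.mpr hjk')
          omega
    have hgS : StrictMono g := by
      intro p q hpq
      have hpq' : (p : ℤ) < q := Subtype.coe_lt_coe.mpr hpq
      by_cases hp : (p:ℤ) ≤ a
      · rw [hgpos p hp (hp.trans haℓ)]
        have h1 := hlow p p.2 hp
        by_cases hq : (q:ℤ) ≤ a
        · rw [hgpos q hq (hq.trans haℓ)]
          exact hhm (Subtype.mk_lt_mk.mpr hpq')
        · rw [hgneg q hq]
          omega
      · rw [hgneg p hp, hgneg q (by omega)]
        exact hpq'
    have hαa : alphaT ℓ f = a := by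
      have hfa : f ⟨a, haℓ⟩ = a := hfpos ⟨a, haℓ⟩ le_rfl
      apply le_antisymm
      · refine csSup_le ⟨a, haℓ, hfa⟩ ?_
        rintro p ⟨hpl, hfp⟩
        by_contra hcon
        push_neg at hcon
        have hp1 : (1:ℤ) ≤ p := by omega
        have he : f ⟨p, hpl⟩ = h ⟨p, ⟨hp1, hpl⟩⟩ := hfneg ⟨p, hpl⟩ (by exact not_le.mpr hcon) hp1
        have := hhigh p hp1 hpl hcon
        omega
      · exact le_csSup ⟨ℓ, fun p hp => hp.1⟩ ⟨haℓ, hfa⟩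
    have hβa : betaT g ≤ a + 1 := by
      have hg1 : g ⟨a+1, Set.mem_Ici.mpr (by omega)⟩ = a + 1 := hgneg ⟨a+1, Set.mem_Ici.mpr (by omega)⟩ (by exact (by omega : ¬ (a+1 ≤ a)))
      exact csInf_le ⟨1, fun p hp => hp.1⟩ ⟨by omega, hg1⟩
    refine ⟨(f, g), ⟨⟨hfS, a, fun j hj => hfpos j hj⟩, ⟨hgS, a+1, fun p hp => hgneg p (by omega)⟩, ?_⟩, ?_⟩
    · show betaT g - 1 ≤ alphaT ℓ f
      rw [hαa]
      omega
    · funext q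
      show (if (q : ℤ) ≤ alphaT ℓ f then g ⟨q, q.2.1⟩ else f ⟨q, q.2.2⟩) = h q
      rw [hαa]
      by_cases hq : (q:ℤ) ≤ a
      · rw [if_pos hq]
        exact hgpos ⟨q, q.2.1⟩ hq q.2.2
      · rw [if_neg hq]
        exact hfneg ⟨q, q.2.2⟩ hq q.2.1
end
end

section
/- The inverse of the bijection Π : T_ℓ → T_{[1,ℓ]} sends the ℓ-tuple (i_1 < i_2 < ⋯ < i_ℓ) to the pair consisting of the sequence (⋯ < 0 < max(i_1,1) < ⋯ < max(i_ℓ,ℓ)) and the sequence (min(i_1,1) < ⋯ < min(i_ℓ,ℓ) < ℓ+1 < ℓ+2 < ⋯). -/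
attribute [local instance] Classical.propDecidable

noncomputable section

/-- The candidate inverse of `Π`, sending `(i_1 < ⋯ < i_ℓ)` to the pair of the
sequence `(⋯ < 0 < max(i_1,1) < ⋯ < max(i_ℓ,ℓ))` and the sequence
`(min(i_1,1) < ⋯ < min(i_ℓ,ℓ) < ℓ+1 < ℓ+2 < ⋯)`. -/
def PiInv (ℓ : ℤ) (h : Set.Icc (1 : ℤ) ℓ → ℤ) :
    (Set.Iic ℓ → ℤ) × (Set.Ici (1 : ℤ) → ℤ) :=
  (fun j => if hj : 1 ≤ (j : ℤ) then max (h ⟨j, hj, j.2⟩) (j : ℤ) else (j : ℤ),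
   fun p => if hp : (p : ℤ) ≤ ℓ then min (h ⟨p, p.2, hp⟩) (p : ℤ) else (p : ℤ))

/-! ### Auxiliary lemmas -/

lemma strictMono_gap {S : Set ℤ} (hS : ∀ ⦃a b c : ℤ⦄, a ∈ S → c ∈ S → a ≤ b → b ≤ c → b ∈ S)
    {f : S → ℤ} (hf : StrictMono f) :
    ∀ (a b : S), (a : ℤ) ≤ b → (b : ℤ) - a ≤ f b - f a := by
  intro a b hab
  obtain ⟨n, hn⟩ : ∃ n : ℕ, (b : ℤ) = a + n := ⟨((b : ℤ) - a).toNat, by omega⟩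
  induction n generalizing b with
  | zero =>
      have : a = b := Subtype.ext (by omega)
      subst this; omega
  | succ n ih =>
      have hb1 : ((b : ℤ) - 1) ∈ S := hS a.2 b.2 (by omega) (by omega)
      have hlt : (⟨(b : ℤ) - 1, hb1⟩ : S) < b := Subtype.coe_lt_coe.mp (by simp only []; omega)
      have h1 := hf hlt
      have h2 := ih ⟨(b : ℤ) - 1, hb1⟩ (by simp only []; omega) (by push_cast; omega)
      simp only [] at h2
      omega

lemma PiInv_fst_pos (ℓ : ℤ) (h : Set.Icc (1 : ℤ) ℓ → ℤ) (p : ℤ) (h1 : 1 ≤ p) (h2 : p ≤ ℓ) :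
    (PiInv ℓ h).1 ⟨p, h2⟩ = max (h ⟨p, h1, h2⟩) p := dif_pos h1

lemma PiInv_fst_neg (ℓ : ℤ) (h : Set.Icc (1 : ℤ) ℓ → ℤ) (p : ℤ) (h1 : ¬ 1 ≤ p) (h2 : p ≤ ℓ) :
    (PiInv ℓ h).1 ⟨p, h2⟩ = p := dif_neg h1

lemma PiInv_snd_pos (ℓ : ℤ) (h : Set.Icc (1 : ℤ) ℓ → ℤ) (p : ℤ) (h1 : 1 ≤ p) (h2 : p ≤ ℓ) :
    (PiInv ℓ h).2 ⟨p, h1⟩ = min (h ⟨p, h1, h2⟩) p := dif_pos h2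

lemma PiInv_snd_neg (ℓ : ℤ) (h : Set.Icc (1 : ℤ) ℓ → ℤ) (p : ℤ) (h1 : 1 ≤ p) (h2 : ¬ p ≤ ℓ) :
    (PiInv ℓ h).2 ⟨p, h1⟩ = p := dif_neg h2

lemma PiMap_pos (ℓ : ℤ) (x : (Set.Iic ℓ → ℤ) × (Set.Ici (1 : ℤ) → ℤ))
    (p : Set.Icc (1 : ℤ) ℓ) (hc : (p : ℤ) ≤ alphaT ℓ x.1) :
    PiMap ℓ x p = x.2 ⟨p, p.2.1⟩ := if_pos hc

lemma PiMap_neg (ℓ : ℤ) (x : (Set.Iic ℓ → ℤ) × (Set.Ici (1 : ℤ) → ℤ))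
    (p : Set.Icc (1 : ℤ) ℓ) (hc : ¬ (p : ℤ) ≤ alphaT ℓ x.1) :
    PiMap ℓ x p = x.1 ⟨p, p.2.2⟩ := if_neg hc

/-- `PiInv` is the inverse of the bijection `Π : T_ℓ → T_{[1,ℓ]}`: for every
strictly increasing `ℓ`-tuple `h`, the pair `PiInv ℓ h` lies in `T_ℓ` (in particular
both sequences are strictly increasing, eventually the identity, and satisfy the
compatibility `α ≥ β − 1`) and `Π` applied to it recovers `h`; conversely
`PiInv ∘ Π = id` on `T_ℓ`. -/
theorem PiInv_is_inverse (ℓ : ℤ) (hl : 1 ≤ ℓ) :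
    (∀ h ∈ TRect ℓ, PiInv ℓ h ∈ TL ℓ ∧ PiMap ℓ (PiInv ℓ h) = h) ∧
    (∀ x ∈ TL ℓ, PiInv ℓ (PiMap ℓ x) = x) := by
  have convIcc : ∀ ⦃a b c : ℤ⦄, a ∈ Set.Icc (1:ℤ) ℓ → c ∈ Set.Icc (1:ℤ) ℓ → a ≤ b → b ≤ c →
      b ∈ Set.Icc (1:ℤ) ℓ := fun a b c ha hc h1 h2 => ⟨le_trans ha.1 h1, le_trans h2 hc.2⟩
  have convIic : ∀ ⦃a b c : ℤ⦄, a ∈ Set.Iic ℓ → c ∈ Set.Iic ℓ → a ≤ b → b ≤ c →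
      b ∈ Set.Iic ℓ := fun a b c _ hc _ h2 => le_trans h2 hc
  have convIci : ∀ ⦃a b c : ℤ⦄, a ∈ Set.Ici (1:ℤ) → c ∈ Set.Ici (1:ℤ) → a ≤ b → b ≤ c →
      b ∈ Set.Ici (1:ℤ) := fun a b c ha _ h1 _ => le_trans ha h1
  constructor
  · -- forward direction
    intro h hh
    have hmono : StrictMono h := hh
    have gap_h := strictMono_gap convIcc hmono
    have hf'mono : StrictMono (PiInv ℓ h).1 := by
      intro j j' hjj
      have hjj' : (j : ℤ) < j' := Subtype.coe_lt_coe.mpr hjj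
      simp only [PiInv]
      by_cases h1 : 1 ≤ (j : ℤ)
      · have h2 : 1 ≤ (j' : ℤ) := by omega
        rw [dif_pos h1, dif_pos h2]
        exact max_lt_max (hmono (Subtype.mk_lt_mk.mpr hjj')) hjj'
      · rw [dif_neg h1]
        by_cases h2 : 1 ≤ (j' : ℤ)
        · rw [dif_pos h2]
          exact hjj'.trans_le (le_max_right _ _)
        · rw [dif_neg h2]; exact hjj'
    have hg'mono : StrictMono (PiInv ℓ h).2 := by
      intro p p' hpp
      have hpp' : (p : ℤ) < p' := Subtype.coe_lt_coe.mpr hpp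
      simp only [PiInv]
      by_cases h1 : (p : ℤ) ≤ ℓ
      · by_cases h2 : (p' : ℤ) ≤ ℓ
        · rw [dif_pos h1, dif_pos h2]
          exact min_lt_min (hmono (Subtype.mk_lt_mk.mpr hpp')) hpp'
        · rw [dif_pos h1, dif_neg h2]
          exact (min_le_right _ _).trans_lt (by omega)
      · have h2 : ¬ (p' : ℤ) ≤ ℓ := by omega
        rw [dif_neg h1, dif_neg h2]; exact hpp'
    set α := alphaT ℓ (PiInv ℓ h).1 with hαdef
    have hl0 : (0 : ℤ) ≤ ℓ := by omega
    have hmem0 : (0 : ℤ) ∈ {p : ℤ | ∃ hp : p ≤ ℓ, (PiInv ℓ h).1 ⟨p, hp⟩ = p} :=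
      ⟨hl0, PiInv_fst_neg ℓ h 0 (by norm_num) hl0⟩
    have hbddS : BddAbove {p : ℤ | ∃ hp : p ≤ ℓ, (PiInv ℓ h).1 ⟨p, hp⟩ = p} :=
      ⟨ℓ, by rintro p ⟨hp, -⟩; exact hp⟩
    have hα0 : 0 ≤ α := le_csSup hbddS hmem0
    obtain ⟨hαℓ, hαfix⟩ := Int.csSup_mem ⟨0, hmem0⟩ hbddS
    have hαle : α ≤ ℓ := hαℓ
    have hαfix2 : (PiInv ℓ h).1 ⟨α, hαle⟩ = α := hαfix
    have hub : ∀ p : ℤ, (hp : p ≤ ℓ) → (PiInv ℓ h).1 ⟨p, hp⟩ = p → p ≤ α :=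
      fun p hp hfix => le_csSup hbddS ⟨hp, hfix⟩
    have key1 : ∀ p : Set.Icc (1:ℤ) ℓ, (p : ℤ) ≤ α → h p ≤ p := by
      intro p hpα
      have h1 : 1 ≤ α := le_trans p.2.1 hpα
      have hfix : (PiInv ℓ h).1 ⟨α, hαle⟩ = α := hαfix2
      rw [PiInv_fst_pos ℓ h α h1 hαle] at hfix
      have hgap : α - (p : ℤ) ≤ h ⟨α, h1, hαle⟩ - h p := gap_h p ⟨α, h1, hαle⟩ hpα
      omega
    have key2 : ∀ p : Set.Icc (1:ℤ) ℓ, α < (p : ℤ) → (p : ℤ) < h p := by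
      intro p hpα
      by_contra hcon
      push_neg at hcon
      have hfix : (PiInv ℓ h).1 ⟨(p : ℤ), p.2.2⟩ = p := by
        rw [PiInv_fst_pos ℓ h p p.2.1 p.2.2]
        exact max_eq_right hcon
      exact absurd (hub _ p.2.2 hfix) (by omega)
    have hcompat : betaT (PiInv ℓ h).2 - 1 ≤ α := by
      have hmem : (α + 1) ∈ {p : ℤ | ∃ hp : (1:ℤ) ≤ p, (PiInv ℓ h).2 ⟨p, hp⟩ = p} := by
        refine ⟨by omega, ?_⟩
        by_cases hc : α + 1 ≤ ℓ
        · rw [PiInv_snd_pos ℓ h (α + 1) (by omega) hc]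
          exact min_eq_right (le_of_lt (key2 ⟨α + 1, by omega, hc⟩ (lt_add_one α)))
        · exact PiInv_snd_neg ℓ h (α + 1) (by omega) hc
      have hle := csInf_le (⟨1, by rintro p ⟨hp, -⟩; exact hp⟩ :
        BddBelow {p : ℤ | ∃ hp : (1:ℤ) ≤ p, (PiInv ℓ h).2 ⟨p, hp⟩ = p}) hmem
      simp only [betaT]
      omega
    refine ⟨⟨⟨hf'mono, 0, fun j hj => PiInv_fst_neg ℓ h j (by omega) j.2⟩,
      ⟨hg'mono, ℓ + 1, fun p hp => PiInv_snd_neg ℓ h p p.2 (by omega)⟩, hcompat⟩, ?_⟩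
    funext p
    by_cases hpα : (p : ℤ) ≤ α
    · rw [PiMap_pos ℓ (PiInv ℓ h) p hpα,
        PiInv_snd_pos ℓ h p p.2.1 p.2.2]
      exact min_eq_left (key1 p hpα)
    · rw [PiMap_neg ℓ (PiInv ℓ h) p hpα,
        PiInv_fst_pos ℓ h p p.2.1 p.2.2]
      exact max_eq_left (le_of_lt (key2 p (by omega)))
  · -- backward direction
    rintro x ⟨⟨hfmono, Nf, hNf⟩, ⟨hgmono, Ng, hNg⟩, hcompat⟩
    have gap_f := strictMono_gap convIic hfmono
    have gap_g := strictMono_gap convIci hgmono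
    set α := alphaT ℓ x.1 with hαdef
    set β := betaT x.2 with hβdef
    have fge : ∀ p : Set.Iic ℓ, (p : ℤ) ≤ x.1 p := by
      intro p
      have hq : min (p : ℤ) Nf ≤ ℓ := le_trans (min_le_left _ _) p.2
      have h1 : x.1 ⟨min (p : ℤ) Nf, hq⟩ = min (p : ℤ) Nf := hNf _ (min_le_right _ _)
      have h2 : (p : ℤ) - min (p : ℤ) Nf ≤ x.1 p - x.1 ⟨min (p : ℤ) Nf, hq⟩ :=
        gap_f ⟨min (p : ℤ) Nf, hq⟩ p (min_le_left _ _)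
      omega
    have gle : ∀ p : Set.Ici (1:ℤ), x.2 p ≤ p := by
      intro p
      have hq : (1:ℤ) ≤ max (p : ℤ) Ng := le_trans p.2 (le_max_left _ _)
      have h1 : x.2 ⟨max (p : ℤ) Ng, hq⟩ = max (p : ℤ) Ng := hNg _ (le_max_right _ _)
      have h2 : max (p : ℤ) Ng - (p : ℤ) ≤ x.2 ⟨max (p : ℤ) Ng, hq⟩ - x.2 p :=
        gap_g p ⟨max (p : ℤ) Ng, hq⟩ (le_max_left _ _)
      omega
    have hmemS : min Nf ℓ ∈ {p : ℤ | ∃ hp : p ≤ ℓ, x.1 ⟨p, hp⟩ = p} :=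
      ⟨min_le_right _ _, hNf _ (min_le_left _ _)⟩
    have hbddS : BddAbove {p : ℤ | ∃ hp : p ≤ ℓ, x.1 ⟨p, hp⟩ = p} :=
      ⟨ℓ, by rintro p ⟨hp, -⟩; exact hp⟩
    obtain ⟨hαℓ, hαfix⟩ := Int.csSup_mem ⟨_, hmemS⟩ hbddS
    have hαle : α ≤ ℓ := hαℓ
    have hαfix2 : x.1 ⟨α, hαle⟩ = α := hαfix
    have hmemT : max Ng 1 ∈ {p : ℤ | ∃ hp : (1:ℤ) ≤ p, x.2 ⟨p, hp⟩ = p} :=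
      ⟨le_max_right _ _, hNg _ (le_max_left _ _)⟩
    have hbddT : BddBelow {p : ℤ | ∃ hp : (1:ℤ) ≤ p, x.2 ⟨p, hp⟩ = p} :=
      ⟨1, by rintro p ⟨hp, -⟩; exact hp⟩
    obtain ⟨hβ1, hβfix⟩ := Int.csInf_mem ⟨_, hmemT⟩ hbddT
    have hβge : 1 ≤ β := hβ1
    have hβfix2 : x.2 ⟨β, hβge⟩ = β := hβfix
    have ffix : ∀ p : Set.Iic ℓ, (p : ℤ) ≤ α → x.1 p = p := by
      intro p hpα
      have h2 : α - (p : ℤ) ≤ x.1 ⟨α, hαle⟩ - x.1 p := gap_f p ⟨α, hαle⟩ hpα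
      have h3 := fge p
      rw [hαfix2] at h2
      omega
    have gfix : ∀ p : Set.Ici (1:ℤ), β ≤ (p : ℤ) → x.2 p = p := by
      intro p hpβ
      have h2 : (p : ℤ) - β ≤ x.2 p - x.2 ⟨β, hβge⟩ := gap_g ⟨β, hβge⟩ p hpβ
      have h3 := gle p
      rw [hβfix2] at h2
      omega
    have e1 : (PiInv ℓ (PiMap ℓ x)).1 = x.1 := by
      funext j
      by_cases h1 : 1 ≤ (j : ℤ)
      · have hj' : (PiInv ℓ (PiMap ℓ x)).1 j = max (PiMap ℓ x ⟨(j : ℤ), h1, j.2⟩) (j : ℤ) :=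
          PiInv_fst_pos ℓ (PiMap ℓ x) j h1 j.2
        rw [hj']
        by_cases h2 : (j : ℤ) ≤ α
        · rw [PiMap_pos ℓ x ⟨(j : ℤ), h1, j.2⟩ h2, ffix j h2]
          exact max_eq_right (gle ⟨(j : ℤ), h1⟩)
        · rw [PiMap_neg ℓ x ⟨(j : ℤ), h1, j.2⟩ h2]
          exact max_eq_left (fge j)
      · have hj' : (PiInv ℓ (PiMap ℓ x)).1 j = (j : ℤ) :=
          PiInv_fst_neg ℓ (PiMap ℓ x) j h1 j.2
        rw [hj']
        exact (ffix j (by omega)).symm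
    have e2 : (PiInv ℓ (PiMap ℓ x)).2 = x.2 := by
      funext p
      by_cases h1 : (p : ℤ) ≤ ℓ
      · have hp' : (PiInv ℓ (PiMap ℓ x)).2 p = min (PiMap ℓ x ⟨(p : ℤ), p.2, h1⟩) (p : ℤ) :=
          PiInv_snd_pos ℓ (PiMap ℓ x) p p.2 h1
        rw [hp']
        by_cases h2 : (p : ℤ) ≤ α
        · rw [PiMap_pos ℓ x ⟨(p : ℤ), p.2, h1⟩ h2]
          exact min_eq_left (gle p)
        · rw [PiMap_neg ℓ x ⟨(p : ℤ), p.2, h1⟩ h2, gfix p (by omega)]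
          exact min_eq_right (fge ⟨(p : ℤ), h1⟩)
      · have hp' : (PiInv ℓ (PiMap ℓ x)).2 p = (p : ℤ) :=
          PiInv_snd_neg ℓ (PiMap ℓ x) p p.2 h1
        rw [hp']
        exact (gfix p (by omega)).symm
    exact Prod.ext e1 e2
end
end

section
/- Let T' ∈ T_0^- with entries (j_p)_{p ≥ 1} and β_{T'} = inf{p ≥ 1 : j_p = p}. If for some integer i the Kashiwara operator ẽ_i acts nontrivially on T' (replacing an entry i+1 by i), then β_{ẽ_i·T'} = β_{T'} if i < β_{T'} - 1, and β_{ẽ_i·T'} = β_{T'} + 1 if i = β_{T'} - 1. -/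
attribute [local instance] Classical.propDecidable

noncomputable section

/-- The Kashiwara operator `ẽ_i` on a sequence: replace the entry `i+1` by `i`. -/
def eMod {γ : Type*} (i : ℤ) (f : γ → ℤ) : γ → ℤ :=
  fun j => if f j = i + 1 then i else f j

private lemma gmono_add (g : Set.Ici (1 : ℤ) → ℤ) (hm : StrictMono g) :
    ∀ k : ℕ, ∀ p q : Set.Ici (1 : ℤ), (q : ℤ) = (p : ℤ) + k → g p + k ≤ g q := by
  intro k
  induction k with
  | zero =>
    intro p q h
    have : p = q := Subtype.ext (by push_cast at h; omega)
    simp [this]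
  | succ k ih =>
    intro p q h
    have hp1 : (1 : ℤ) ≤ (p : ℤ) + k := le_trans p.2 (by omega)
    have h1 := ih p ⟨(p : ℤ) + k, hp1⟩ rfl
    have h2 : g ⟨(p : ℤ) + k, hp1⟩ < g q := by
      apply hm
      apply Subtype.coe_lt_coe.mp
      push_cast
      omega
    push_cast at h1 h2 ⊢
    omega

private lemma gdiff (g : Set.Ici (1 : ℤ) → ℤ) (hm : StrictMono g)
    (p q : Set.Ici (1 : ℤ)) (h : (p : ℤ) ≤ q) : (q : ℤ) - p ≤ g q - g p := by
  have hk : (q : ℤ) = (p : ℤ) + (((q : ℤ) - p).toNat : ℤ) := by omega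
  have := gmono_add g hm ((q : ℤ) - p).toNat p q hk
  omega

/-- Let `T' ∈ T_0^-` with `β_{T'} = inf {p ≥ 1 : j_p = p}`.  If the Kashiwara
operator `ẽ_i` acts nontrivially on `T'` (i.e. `i+1` occurs among the entries and
`i` does not), then `β_{ẽ_i·T'} = β_{T'}` if `i < β_{T'} − 1`, and
`β_{ẽ_i·T'} = β_{T'} + 1` if `i = β_{T'} − 1`. -/
theorem eTilde_beta (i : ℤ) (g : Set.Ici (1 : ℤ) → ℤ) (hg : g ∈ TMinus)
    (hocc : ∃ p : Set.Ici (1 : ℤ), g p = i + 1)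
    (hnocc : ∀ p : Set.Ici (1 : ℤ), g p ≠ i) :
    (i < betaT g - 1 → betaT (eMod i g) = betaT g) ∧
    (i = betaT g - 1 → betaT (eMod i g) = betaT g + 1) := by
  obtain ⟨hm, N, hN⟩ := hg
  -- g p ≤ p for all p
  have gle : ∀ p : Set.Ici (1 : ℤ), g p ≤ (p : ℤ) := by
    intro p
    have hM1 : (1 : ℤ) ≤ max (max 1 N) (p : ℤ) := le_trans (le_max_left 1 N) (le_max_left _ _)
    set q : Set.Ici (1 : ℤ) := ⟨max (max 1 N) (p : ℤ), hM1⟩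
    have hq : g q = (q : ℤ) := hN q (le_trans (le_max_right 1 N) (le_max_left _ _))
    have := gdiff g hm p q (le_max_right _ _)
    omega
  set B : Set ℤ := {p : ℤ | ∃ h : (1 : ℤ) ≤ p, g ⟨p, h⟩ = p} with hB
  have hBne : B.Nonempty := by
    refine ⟨max 1 N, le_max_left 1 N, ?_⟩
    exact hN ⟨max 1 N, le_max_left 1 N⟩ (le_max_right 1 N)
  have hBbdd : BddBelow B := ⟨1, by rintro p ⟨h, -⟩; exact h⟩
  have hβB : betaT g ∈ B := Int.csInf_mem hBne hBbdd
  obtain ⟨hβ1, hβeq⟩ := hβB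
  have hlt : ∀ p : Set.Ici (1 : ℤ), (p : ℤ) < betaT g → g p < (p : ℤ) := by
    intro p hp
    rcases lt_or_eq_of_le (gle p) with h | h
    · exact h
    · exfalso
      have : betaT g ≤ (p : ℤ) := csInf_le hBbdd ⟨p.2, by rw [Subtype.coe_eta]; exact h⟩
      omega
  have hup : ∀ p : Set.Ici (1 : ℤ), betaT g ≤ (p : ℤ) → g p = (p : ℤ) := by
    intro p hp
    have h1 := gdiff g hm ⟨betaT g, hβ1⟩ p hp
    have h2 := gle p
    simp only [Subtype.coe_mk] at h1
    omega
  constructor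
  · -- case i < β - 1
    intro hi
    apply le_antisymm
    · apply csInf_le ⟨1, by rintro p ⟨h, -⟩; exact h⟩
      refine ⟨hβ1, ?_⟩
      show eMod i g ⟨betaT g, hβ1⟩ = betaT g
      unfold eMod
      rw [if_neg (by omega), hβeq]
    · apply le_csInf
      · exact ⟨betaT g, hβ1, by show eMod i g _ = _; unfold eMod; rw [if_neg (by omega), hβeq]⟩
      · rintro p ⟨hp1, hpe⟩
        by_contra hcon
        push_neg at hcon
        have hgp : g ⟨p, hp1⟩ < p := hlt ⟨p, hp1⟩ hcon
        have : eMod i g ⟨p, hp1⟩ = p := hpe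
        unfold eMod at this
        split at this <;> omega
  · -- case i = β - 1
    intro hi
    apply le_antisymm
    · apply csInf_le ⟨1, by rintro p ⟨h, -⟩; exact h⟩
      have h1 : (1 : ℤ) ≤ betaT g + 1 := by omega
      refine ⟨h1, ?_⟩
      show eMod i g ⟨betaT g + 1, h1⟩ = betaT g + 1
      have hq : g ⟨betaT g + 1, h1⟩ = betaT g + 1 := hup _ (by simp)
      unfold eMod
      rw [if_neg (by omega)]
      exact hq
    · apply le_csInf
      · have h1 : (1 : ℤ) ≤ betaT g + 1 := by omega
        refine ⟨betaT g + 1, h1, ?_⟩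
        show eMod i g ⟨betaT g + 1, h1⟩ = betaT g + 1
        have hq : g ⟨betaT g + 1, h1⟩ = betaT g + 1 := hup _ (by simp)
        unfold eMod
        rw [if_neg (by omega)]
        exact hq
      · rintro p ⟨hp1, hpe⟩
        by_contra hcon
        push_neg at hcon
        have : eMod i g ⟨p, hp1⟩ = p := hpe
        unfold eMod at this
        rcases lt_or_eq_of_le (show (p : ℤ) ≤ betaT g by omega) with h | h
        · have hgp : g ⟨p, hp1⟩ < p := hlt ⟨p, hp1⟩ h
          split at this <;> omega
        · have hgp : g ⟨p, hp1⟩ = p := by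
            have h2 := hβeq
            subst h
            exact h2
          split at this <;> omega
end
end

section
/- The bijection Π : T_ℓ → T_{[1,ℓ]} commutes with the crystal operators: for all (T, T') ∈ T_ℓ and all i ∈ ℤ, Π(f̃_i · (T ⊗ T')) = f̃_i · Π(T ⊗ T') and Π(ẽ_i · (T ⊗ T')) = ẽ_i · Π(T ⊗ T'), where Π(0) = 0 by convention and on T_{[1,ℓ]} the operator f̃_i replaces an entry i by i+1 when i occurs and i+1 does not (otherwise 0), and ẽ_i replaces i+1 by i when i+1 occurs and i does not (otherwise 0). -/
attribute [local instance] Classical.propDecidable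

noncomputable section

/-- `ẽ_i` is applicable to a column: `i+1` occurs among the entries and `i` does not. -/
def eApp {γ : Type*} (i : ℤ) (f : γ → ℤ) : Prop :=
  (∃ p, f p = i + 1) ∧ ∀ p, f p ≠ i

/-- `f̃_i` is applicable to a column: `i` occurs among the entries and `i+1` does not. -/
def fApp {γ : Type*} (i : ℤ) (f : γ → ℤ) : Prop :=
  (∃ p, f p = i) ∧ ∀ p, f p ≠ i + 1

/-- Replace the entry `i` by `i+1`. -/
def fMod {γ : Type*} (i : ℤ) (f : γ → ℤ) : γ → ℤ :=
  fun j => if f j = i then i + 1 else f j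

/-- The Kashiwara operator `ẽ_i` on a column crystal, with value `none` for `0`. -/
def eCol {γ : Type*} (i : ℤ) (f : γ → ℤ) : Option (γ → ℤ) :=
  if eApp i f then some (eMod i f) else none

/-- The Kashiwara operator `f̃_i` on a column crystal, with value `none` for `0`. -/
def fCol {γ : Type*} (i : ℤ) (f : γ → ℤ) : Option (γ → ℤ) :=
  if fApp i f then some (fMod i f) else none

/-- Kashiwara's tensor product rule for `ẽ_i` on `T ⊗ T'` (here `ε_i, φ_i ∈ {0,1}`
on each factor): `ẽ_i (b₁ ⊗ b₂) = ẽ_i b₁ ⊗ b₂` if `φ_i(b₁) ≥ ε_i(b₂)`, and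
`b₁ ⊗ ẽ_i b₂` otherwise. -/
def eTen (ℓ : ℤ) (i : ℤ) (x : (Set.Iic ℓ → ℤ) × (Set.Ici (1 : ℤ) → ℤ)) :
    Option ((Set.Iic ℓ → ℤ) × (Set.Ici (1 : ℤ) → ℤ)) :=
  if fApp i x.1 ∨ ¬ eApp i x.2 then
    (if eApp i x.1 then some (eMod i x.1, x.2) else none)
  else some (x.1, eMod i x.2)

/-- Kashiwara's tensor product rule for `f̃_i` on `T ⊗ T'`:
`f̃_i (b₁ ⊗ b₂) = f̃_i b₁ ⊗ b₂` if `φ_i(b₁) > ε_i(b₂)`, and `b₁ ⊗ f̃_i b₂` otherwise. -/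
def fTen (ℓ : ℤ) (i : ℤ) (x : (Set.Iic ℓ → ℤ) × (Set.Ici (1 : ℤ) → ℤ)) :
    Option ((Set.Iic ℓ → ℤ) × (Set.Ici (1 : ℤ) → ℤ)) :=
  if fApp i x.1 ∧ ¬ eApp i x.2 then some (fMod i x.1, x.2)
  else (if fApp i x.2 then some (x.1, fMod i x.2) else none)

lemma grow_aux {s : Set ℤ} (hc : ∀ ⦃a b c : ℤ⦄, a ∈ s → c ∈ s → a ≤ b → b ≤ c → b ∈ s)
    {f : s → ℤ} (hf : StrictMono f) :
    ∀ k : ℕ, ∀ a b : s, (b : ℤ) = (a : ℤ) + k → f a + (k : ℤ) ≤ f b := by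
  intro k
  induction k with
  | zero =>
    intro a b hb
    have : a = b := Subtype.ext (by push_cast at hb; omega)
    simp [this]
  | succ n ih =>
    intro a b hb
    push_cast at hb
    have hmem : ((a : ℤ) + n) ∈ s := hc a.2 b.2 (by omega) (by omega)
    have h1 := ih a ⟨(a : ℤ) + n, hmem⟩ (by push_cast; ring)
    have h2 : f ⟨(a : ℤ) + n, hmem⟩ < f b :=
      hf (by simp only [Subtype.mk_lt_mk, ← Subtype.coe_lt_coe]; omega)
    push_cast
    omega

lemma grow {s : Set ℤ} (hc : ∀ ⦃a b c : ℤ⦄, a ∈ s → c ∈ s → a ≤ b → b ≤ c → b ∈ s)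
    {f : s → ℤ} (hf : StrictMono f) (a b : s) (hab : (a : ℤ) ≤ b) :
    f a + ((b : ℤ) - a) ≤ f b := by
  have := grow_aux hc hf ((b : ℤ) - a).toNat a b (by omega)
  rwa [Int.toNat_of_nonneg (by omega)] at this

/-- The bijection `Π : T_ℓ → T_{[1,ℓ]}` commutes with the crystal operators: for
`x ∈ T_ℓ` and `i ∈ ℤ`, `Π(ẽ_i · x) = ẽ_i · Π(x)` and `Π(f̃_i · x) = f̃_i · Π(x)`,
where on `T_{[1,ℓ]}` the operator `ẽ_i` replaces `i+1` by `i` (when `i+1` occurs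
and `i` does not, otherwise `0`), `f̃_i` replaces `i` by `i+1` (when `i` occurs
and `i+1` does not, otherwise `0`), and `Π(0) = 0` by convention. -/
theorem PiMap_commutes_with_crystal_ops (ℓ : ℤ) (hl : 1 ≤ ℓ) :
    ∀ x ∈ TL ℓ, ∀ i : ℤ,
      Option.map (PiMap ℓ) (eTen ℓ i x) = eCol i (PiMap ℓ x) ∧
      Option.map (PiMap ℓ) (fTen ℓ i x) = fCol i (PiMap ℓ x) := by
  rintro ⟨f, g⟩ ⟨⟨hfm, N₁, hN₁⟩, ⟨hgm, N₂, hN₂⟩, hab⟩ i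
  replace hfm : StrictMono f := hfm
  replace hgm : StrictMono g := hgm
  replace hN₁ : ∀ j : Set.Iic ℓ, (j : ℤ) ≤ N₁ → f j = (j : ℤ) := hN₁
  replace hN₂ : ∀ p : Set.Ici (1:ℤ), N₂ ≤ (p : ℤ) → g p = (p : ℤ) := hN₂
  set α := alphaT ℓ f with hαdef
  set β := betaT g with hβdef
  -- convexity of the index sets
  have hcIic : ∀ ⦃a b c : ℤ⦄, a ∈ Set.Iic ℓ → c ∈ Set.Iic ℓ → a ≤ b → b ≤ c → b ∈ Set.Iic ℓ := by
    intro a b c _ hc _ hbc; exact le_trans hbc hc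
  have hcIci : ∀ ⦃a b c : ℤ⦄, a ∈ Set.Ici (1:ℤ) → c ∈ Set.Ici (1:ℤ) → a ≤ b → b ≤ c → b ∈ Set.Ici (1:ℤ) := by
    intro a b c ha _ hab _; exact le_trans ha hab
  have hfgrow : ∀ a b : Set.Iic ℓ, (a : ℤ) ≤ b → f a + ((b : ℤ) - a) ≤ f b := grow hcIic hfm
  have hggrow : ∀ a b : Set.Ici (1:ℤ), (a : ℤ) ≤ b → g a + ((b : ℤ) - a) ≤ g b := grow hcIci hgm
  have hflt : ∀ a b : Set.Iic ℓ, (a : ℤ) < b → f a < f b := fun a b h => hfm (Subtype.coe_lt_coe.mp h)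
  have hglt : ∀ a b : Set.Ici (1:ℤ), (a : ℤ) < b → g a < g b := fun a b h => hgm (Subtype.coe_lt_coe.mp h)
  have hfinj : ∀ a b : Set.Iic ℓ, f a = f b → (a : ℤ) = b := by
    intro a b h
    rcases lt_trichotomy (a : ℤ) (b : ℤ) with hc | hc | hc
    · have := hflt a b hc; omega
    · exact hc
    · have := hflt b a hc; omega
  have hginj : ∀ a b : Set.Ici (1:ℤ), g a = g b → (a : ℤ) = b := by
    intro a b h
    rcases lt_trichotomy (a : ℤ) (b : ℤ) with hc | hc | hc
    · have := hglt a b hc; omega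
    · exact hc
    · have := hglt b a hc; omega
  -- f p ≥ p
  have hfid : ∀ p : Set.Iic ℓ, (p : ℤ) ≤ f p := by
    intro p
    have hm : min (p : ℤ) N₁ ≤ ℓ := le_trans (min_le_left _ _) p.2
    have h1 := hfgrow ⟨min (p : ℤ) N₁, hm⟩ p (min_le_left _ _)
    rw [hN₁ ⟨min (p : ℤ) N₁, hm⟩ (min_le_right _ _)] at h1
    simp only at h1
    omega
  -- g q ≤ q
  have hgid : ∀ q : Set.Ici (1:ℤ), g q ≤ (q : ℤ) := by
    intro q
    have hm : (1:ℤ) ≤ max (q : ℤ) N₂ := le_trans q.2 (le_max_left _ _)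
    have h1 := hggrow q ⟨max (q : ℤ) N₂, hm⟩ (le_max_left _ _)
    rw [hN₂ ⟨max (q : ℤ) N₂, hm⟩ (le_max_right _ _)] at h1
    simp only at h1
    omega
  -- α is a fixed point
  have hαmem : ∃ h : α ≤ ℓ, f ⟨α, h⟩ = α := by
    have h1 : ({p : ℤ | ∃ h : p ≤ ℓ, f ⟨p, h⟩ = p}).Nonempty :=
      ⟨min N₁ ℓ, min_le_right _ _, hN₁ _ (min_le_left _ _)⟩
    have h2 : BddAbove {p : ℤ | ∃ h : p ≤ ℓ, f ⟨p, h⟩ = p} := ⟨ℓ, fun p hp => hp.1⟩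
    exact Int.csSup_mem h1 h2
  obtain ⟨hαℓ, hfα⟩ := hαmem
  have hαub : ∀ p : Set.Iic ℓ, f p = (p : ℤ) → (p : ℤ) ≤ α := by
    intro p hp
    exact le_csSup ⟨ℓ, fun q hq => hq.1⟩ ⟨p.2, hp⟩
  have hfix : ∀ p : Set.Iic ℓ, (p : ℤ) ≤ α → f p = (p : ℤ) := by
    intro p hp
    have h1 : f p + (α - (p : ℤ)) ≤ α := by simpa [hfα] using hfgrow p ⟨α, hαℓ⟩ hp
    have := hfid p
    omega
  have hbig : ∀ p : Set.Iic ℓ, α < (p : ℤ) → (p : ℤ) + 1 ≤ f p := by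
    intro p hp
    have h1 := hfid p
    rcases eq_or_lt_of_le h1 with h | h
    · exact absurd (hαub p h.symm) (by omega)
    · omega
  -- β is a fixed point
  have hβmem : ∃ h : (1:ℤ) ≤ β, g ⟨β, h⟩ = β := by
    have h1 : ({p : ℤ | ∃ h : (1:ℤ) ≤ p, g ⟨p, h⟩ = p}).Nonempty :=
      ⟨max N₂ 1, le_max_right _ _, hN₂ _ (le_max_left _ _)⟩
    have h2 : BddBelow {p : ℤ | ∃ h : (1:ℤ) ≤ p, g ⟨p, h⟩ = p} := ⟨1, fun p hp => hp.1⟩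
    exact Int.csInf_mem h1 h2
  obtain ⟨hβ1, hgβ⟩ := hβmem
  have hβlb : ∀ q : Set.Ici (1:ℤ), g q = (q : ℤ) → β ≤ (q : ℤ) := by
    intro q hq
    exact csInf_le ⟨1, fun p hp => hp.1⟩ ⟨q.2, hq⟩
  have hgfix : ∀ q : Set.Ici (1:ℤ), β ≤ (q : ℤ) → g q = (q : ℤ) := by
    intro q hq
    have h1 : β + ((q : ℤ) - β) ≤ g q := by simpa [hgβ] using hggrow ⟨β, hβ1⟩ q hq
    have := hgid q
    omega
  have hgsmall : ∀ q : Set.Ici (1:ℤ), (q : ℤ) < β → g q ≤ (q : ℤ) - 1 := by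
    intro q hq
    have h1 := hgid q
    rcases eq_or_lt_of_le h1 with h | h
    · exact absurd (hβlb q h) (by omega)
    · omega
  have hα0 : (0:ℤ) ≤ α := by omega
  have hβα : β ≤ α + 1 := by omega
  have hfsmall : ∀ p : Set.Iic ℓ, (p : ℤ) ≤ α → f p ≤ α := by
    intro p hp; have := hfix p hp; omega
  have hflarge : ∀ p : Set.Iic ℓ, α < (p : ℤ) → α + 2 ≤ f p := by
    intro p hp; have := hbig p hp; omega
  have hnoα1 : ∀ p : Set.Iic ℓ, f p ≠ α + 1 := by
    intro p
    by_cases hp : (p : ℤ) ≤ α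
    · have := hfix p hp; omega
    · have := hflarge p (by omega); omega
  -- values of PiMap
  have hval_le : ∀ p : ↥(Set.Icc (1:ℤ) ℓ), (p : ℤ) ≤ α → PiMap ℓ (f, g) p = g ⟨(p:ℤ), p.2.1⟩ := by
    intro p hp; exact if_pos hp
  have hval_gt : ∀ p : ↥(Set.Icc (1:ℤ) ℓ), α < (p : ℤ) → PiMap ℓ (f, g) p = f ⟨(p:ℤ), p.2.2⟩ := by
    intro p hp; exact if_neg (show ¬ ((p:ℤ) ≤ α) by omega)
  have hPle : ∀ p : ↥(Set.Icc (1:ℤ) ℓ), (p : ℤ) ≤ α → PiMap ℓ (f, g) p ≤ α := by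
    intro p hp
    rw [hval_le p hp]
    exact le_trans (hgid ⟨(p:ℤ), p.2.1⟩) hp
  have hPgt : ∀ p : ↥(Set.Icc (1:ℤ) ℓ), α < (p : ℤ) → α + 2 ≤ PiMap ℓ (f, g) p := by
    intro p hp
    rw [hval_gt p hp]
    exact hflarge ⟨(p:ℤ), p.2.2⟩ hp
  constructor
  · -- ẽ_i
    by_cases hcond : fApp i f ∨ ¬ eApp i g
    · by_cases hef : eApp i f
      · -- ẽ acts on the first factor
        obtain ⟨⟨p₀, hp₀⟩, hfnoti⟩ := id hef
        have hiα : α + 1 ≤ i := by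
          by_contra hc
          push_neg at hc
          exact hfnoti ⟨i, show i ≤ ℓ by omega⟩ (hfix ⟨i, show i ≤ ℓ by omega⟩ (show i ≤ α by omega))
        have hp₀α : α < (p₀ : ℤ) := by
          by_contra hc
          push_neg at hc
          have := hfsmall p₀ hc
          omega
        have hp₀i : (p₀ : ℤ) ≤ i := by have := hbig p₀ hp₀α; omega
        have heh : eApp i (PiMap ℓ (f, g)) := by
          constructor
          · refine ⟨⟨(p₀ : ℤ), ⟨show (1:ℤ) ≤ (p₀:ℤ) by omega, p₀.2⟩⟩, ?_⟩
            rw [hval_gt _ (show α < (p₀:ℤ) from hp₀α)]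
            exact hp₀
          · intro p
            by_cases hp : (p : ℤ) ≤ α
            · have := hPle p hp; omega
            · rw [hval_gt p (by omega)]
              exact hfnoti _
        simp only [eTen, eCol]
        rw [if_pos hcond, if_pos hef, if_pos heh, Option.map_some]
        congr 1
        by_cases hspec : (p₀ : ℤ) = i
        · -- the special case: f(i) = i + 1, i = α + 1
          have hiℓ : i ≤ ℓ := by have h0 : (p₀:ℤ) ≤ ℓ := p₀.2; omega
          have hieq : i = α + 1 := by
            by_contra hne
            have hi1 : i - 1 ≤ ℓ := by omega
            have h2 := hbig ⟨i - 1, hi1⟩ (show α < i - 1 by omega)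
            have h3 : f ⟨i - 1, hi1⟩ < f p₀ := hflt _ _ (show (i:ℤ) - 1 < p₀ by omega)
            have h4 := hfnoti ⟨i - 1, hi1⟩
            simp only at h2
            omega
          have hpe : (⟨i, hiℓ⟩ : Set.Iic ℓ) = p₀ := Subtype.ext hspec.symm
          have hmem : i ∈ {p : ℤ | ∃ h : p ≤ ℓ, eMod i f ⟨p, h⟩ = p} := by
            refine ⟨hiℓ, ?_⟩
            simp only [eMod, hpe, hp₀, if_pos]
          have hα' : alphaT ℓ (eMod i f) = i := by
            apply le_antisymm
            · apply csSup_le ⟨i, hmem⟩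
              rintro p ⟨hp, hv⟩
              simp only [eMod] at hv
              split_ifs at hv with hc
              · omega
              · have h9 : p ≤ α := hαub ⟨p, hp⟩ hv; omega
            · exact le_csSup ⟨ℓ, fun p hp => hp.1⟩ hmem
          funext p
          simp only [PiMap, eMod, hα', ← hαdef]
          by_cases h3 : (p : ℤ) ≤ α
          · have hgb : g ⟨(p:ℤ), p.2.1⟩ ≤ (p:ℤ) := hgid _
            have hff : f ⟨(p:ℤ), p.2.2⟩ = (p:ℤ) := hfix _ h3
            split_ifs <;> omega
          · by_cases h4 : (p : ℤ) = i
            · have hfp : f ⟨(p:ℤ), p.2.2⟩ = i + 1 := by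
                rw [show (⟨(p:ℤ), p.2.2⟩ : Set.Iic ℓ) = p₀ from Subtype.ext (show (p:ℤ) = (p₀:ℤ) by omega)]
                exact hp₀
              have h9 : g ⟨(p:ℤ), p.2.1⟩ = (p:ℤ) := hgfix _ (show β ≤ (p:ℤ) by omega)
              split_ifs <;> omega
            · have hne : f ⟨(p:ℤ), p.2.2⟩ ≠ i + 1 := by
                intro hcc
                have h9 : (p:ℤ) = (p₀:ℤ) := hfinj ⟨(p:ℤ), p.2.2⟩ p₀ (hcc.trans hp₀.symm)
                omega
              have hfb : α + 2 ≤ f ⟨(p:ℤ), p.2.2⟩ := hflarge _ (show α < (p:ℤ) by omega)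
              split_ifs <;> omega
        · -- generic case: α unchanged
          have hα' : alphaT ℓ (eMod i f) = α := by
            have hset : {p : ℤ | ∃ h : p ≤ ℓ, eMod i f ⟨p, h⟩ = p}
                = {p : ℤ | ∃ h : p ≤ ℓ, f ⟨p, h⟩ = p} := by
              ext p
              constructor
              · rintro ⟨hp, hv⟩
                refine ⟨hp, ?_⟩
                simp only [eMod] at hv
                split_ifs at hv with hc
                · have h9 : p = (p₀:ℤ) := hfinj ⟨p, hp⟩ p₀ (hc.trans hp₀.symm)
                  omega
                · exact hv
              · rintro ⟨hp, hv⟩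
                refine ⟨hp, ?_⟩
                have hne : f ⟨p, hp⟩ ≠ i + 1 := by
                  have h8 : p ≤ α := hαub ⟨p, hp⟩ hv
                  intro hcc
                  rw [hcc] at hv
                  omega
                simp only [eMod, if_neg hne]
                exact hv
            exact congrArg sSup hset
          funext p
          simp only [PiMap, eMod, hα', ← hαdef]
          by_cases h3 : (p : ℤ) ≤ α
          · have hgb : g ⟨(p:ℤ), p.2.1⟩ ≤ (p:ℤ) := hgid _
            have hff : f ⟨(p:ℤ), p.2.2⟩ = (p:ℤ) := hfix _ h3
            split_ifs <;> omega
          · have hfb : α + 2 ≤ f ⟨(p:ℤ), p.2.2⟩ := hflarge _ (show α < (p:ℤ) by omega)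
            split_ifs <;> omega
      · -- ẽ kills the first factor, and kills the whole thing
        have hneh : ¬ eApp i (PiMap ℓ (f, g)) := by
          rintro ⟨⟨p, hp⟩, hnoti⟩
          by_cases hpα : (p : ℤ) ≤ α
          · rw [hval_le p hpα] at hp
            have h0 : g ⟨(p:ℤ), p.2.1⟩ ≤ (p:ℤ) := hgid _
            have hi1 : i + 1 ≤ α := by omega
            have hnf : ¬ fApp i f := by
              rintro ⟨_, hno⟩
              exact hno ⟨i + 1, show i + 1 ≤ ℓ by omega⟩ (hfix ⟨i + 1, show i + 1 ≤ ℓ by omega⟩ (show i + 1 ≤ α from hi1))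
            have hneg : ¬ eApp i g := hcond.resolve_left hnf
            obtain ⟨r, hr⟩ : ∃ r, g r = i := by
              by_contra hno
              push_neg at hno
              exact hneg ⟨⟨⟨(p:ℤ), p.2.1⟩, hp⟩, hno⟩
            have hrp : (r : ℤ) < p := by
              rcases lt_trichotomy (r : ℤ) ((p:ℤ)) with h | h | h
              · exact h
              · have : r = ⟨(p:ℤ), p.2.1⟩ := Subtype.ext h
                rw [this, hp] at hr
                omega
              · have := hglt ⟨(p:ℤ), p.2.1⟩ r h
                omega
            refine hnoti ⟨(r:ℤ), ⟨r.2, show (r:ℤ) ≤ ℓ by omega⟩⟩ ?_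
            rw [hval_le _ (show (r:ℤ) ≤ α by omega)]
            exact hr
          · rw [hval_gt p (by omega)] at hp
            apply hef
            refine ⟨⟨⟨(p:ℤ), p.2.2⟩, hp⟩, ?_⟩
            intro q hq
            by_cases hqα : (q : ℤ) ≤ α
            · have h5 := hfsmall q hqα
              have h6 : α + 2 ≤ f ⟨(p:ℤ), p.2.2⟩ := hflarge _ (show α < (p:ℤ) by omega)
              omega
            · refine hnoti ⟨(q:ℤ), ⟨show (1:ℤ) ≤ (q:ℤ) by omega, q.2⟩⟩ ?_
              rw [hval_gt _ (show α < (q:ℤ) by omega)]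
              exact hq
        simp only [eTen, eCol]
        rw [if_pos hcond, if_neg hef, if_neg hneh]
        rfl
    · -- ẽ acts on the second factor
      have hnf : ¬ fApp i f := fun h => hcond (Or.inl h)
      have heg : eApp i g := not_not.mp (fun h => hcond (Or.inr h))
      obtain ⟨⟨q, hq⟩, hgnoti⟩ := id heg
      have hiβ : i + 1 ≤ β := by
        by_contra hc
        push_neg at hc
        exact hgnoti ⟨i, show (1:ℤ) ≤ i by omega⟩ (hgfix ⟨i, show (1:ℤ) ≤ i by omega⟩ (show β ≤ i by omega))
      have hiα : i + 1 ≤ α := by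
        by_contra hc
        have hieq : i = α := by omega
        apply hnf
        refine ⟨⟨⟨α, hαℓ⟩, by rw [hfα]; omega⟩, ?_⟩
        intro p hp
        exact hnoα1 p (by omega)
      have hqα : (q : ℤ) ≤ α := by
        by_cases hqβ : β ≤ (q : ℤ)
        · have := hgfix q hqβ; omega
        · omega
      have heh : eApp i (PiMap ℓ (f, g)) := by
        refine ⟨⟨⟨(q:ℤ), ⟨q.2, show (q:ℤ) ≤ ℓ by omega⟩⟩, ?_⟩, ?_⟩
        · rw [hval_le _ (show (q:ℤ) ≤ α from hqα)]
          exact hq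
        · intro p
          by_cases hpα : (p : ℤ) ≤ α
          · rw [hval_le p hpα]
            exact hgnoti _
          · have := hPgt p (by omega)
            omega
      simp only [eTen, eCol]
      rw [if_neg hcond, if_pos heh, Option.map_some]
      congr 1
      funext p
      simp only [PiMap, eMod, ← hαdef]
      by_cases hpα : (p : ℤ) ≤ α
      · split_ifs <;> omega
      · have hfb : α + 2 ≤ f ⟨(p:ℤ), p.2.2⟩ := hflarge _ (show α < (p:ℤ) by omega)
        split_ifs <;> omega
  · -- f̃_i
    by_cases hcond : fApp i f ∧ ¬ eApp i g
    · obtain ⟨hff0, hneg⟩ := id hcond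
      obtain ⟨⟨p₁, hp₁⟩, hfnoti1⟩ := id hff0
      by_cases hiα : i = α
      · -- boundary case: i = α, the operator moves the cut
        have hβle : β ≤ α := by
          by_contra hc
          apply hneg
          refine ⟨⟨⟨α + 1, show (1:ℤ) ≤ α + 1 by omega⟩, ?_⟩, ?_⟩
          · have h9 : g ⟨α + 1, show (1:ℤ) ≤ α + 1 by omega⟩ = α + 1 :=
              hgfix _ (show β ≤ α + 1 by omega)
            rw [h9]
            omega
          · intro s hs
            by_cases hsβ : β ≤ (s:ℤ)
            · have := hgfix s hsβ
              omega
            · have := hgsmall s (by omega)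
              omega
        have hα1 : (1:ℤ) ≤ α := by omega
        have hfh : fApp i (PiMap ℓ (f, g)) := by
          refine ⟨⟨⟨α, ⟨hα1, hαℓ⟩⟩, ?_⟩, ?_⟩
          · rw [hval_le _ (show α ≤ α from le_refl α)]
            exact (hgfix ⟨α, show (1:ℤ) ≤ α by omega⟩ hβle).trans hiα.symm
          · intro p
            by_cases hpα : (p:ℤ) ≤ α
            · have := hPle p hpα
              omega
            · have := hPgt p (by omega)
              omega
        simp only [fTen, fCol]
        rw [if_pos hcond, if_pos hfh, Option.map_some]
        congr 1
        have hmem' : (α - 1) ∈ {p : ℤ | ∃ h : p ≤ ℓ, fMod i f ⟨p, h⟩ = p} := by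
          refine ⟨show α - 1 ≤ ℓ by omega, ?_⟩
          have h8 : f ⟨α - 1, show α - 1 ≤ ℓ by omega⟩ = α - 1 :=
            hfix _ (show α - 1 ≤ α by omega)
          have hne : f ⟨α - 1, show α - 1 ≤ ℓ by omega⟩ ≠ i := by omega
          simp only [fMod, if_neg hne]
          exact h8
        have hα' : alphaT ℓ (fMod i f) = α - 1 := by
          apply le_antisymm
          · apply csSup_le ⟨α - 1, hmem'⟩
            rintro p ⟨hp, hv⟩
            simp only [fMod] at hv
            split_ifs at hv with hc
            · have h8 : p + 1 ≤ f ⟨p, hp⟩ := hbig _ (show α < p by omega)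
              omega
            · have h9 : p ≤ α := hαub ⟨p, hp⟩ hv
              omega
          · exact le_csSup ⟨ℓ, fun s hs => hs.1⟩ hmem'
        funext p
        simp only [PiMap, fMod, hα', ← hαdef]
        by_cases h3 : (p:ℤ) ≤ α - 1
        · have hgb : g ⟨(p:ℤ), p.2.1⟩ ≤ (p:ℤ) := hgid _
          have hff : f ⟨(p:ℤ), p.2.2⟩ = (p:ℤ) := hfix _ (show (p:ℤ) ≤ α by omega)
          split_ifs <;> omega
        · by_cases h4 : (p:ℤ) = α
          · have hff : f ⟨(p:ℤ), p.2.2⟩ = (p:ℤ) := hfix _ (show (p:ℤ) ≤ α by omega)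
            have h9 : g ⟨(p:ℤ), p.2.1⟩ = (p:ℤ) := hgfix _ (show β ≤ (p:ℤ) by omega)
            split_ifs <;> omega
          · have hfb : α + 2 ≤ f ⟨(p:ℤ), p.2.2⟩ := hflarge _ (show α < (p:ℤ) by omega)
            split_ifs <;> omega
      · -- interior case: the entry i sits strictly above the cut
        have hkey : α < (p₁:ℤ) ∧ α + 2 ≤ i := by
          by_cases hc : (p₁:ℤ) ≤ α
          · exfalso
            have h8 := hfix p₁ hc
            have hi : i < α := by omega
            exact hfnoti1 ⟨i + 1, show i + 1 ≤ ℓ by omega⟩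
              (hfix ⟨i + 1, show i + 1 ≤ ℓ by omega⟩ (show i + 1 ≤ α by omega))
          · have := hbig p₁ (by omega)
            constructor <;> omega
        obtain ⟨hp₁α, hi2⟩ := hkey
        have hfh : fApp i (PiMap ℓ (f, g)) := by
          refine ⟨⟨⟨(p₁:ℤ), ⟨show (1:ℤ) ≤ (p₁:ℤ) by omega, p₁.2⟩⟩, ?_⟩, ?_⟩
          · rw [hval_gt _ (show α < (p₁:ℤ) from hp₁α)]
            exact hp₁
          · intro p
            by_cases hpα : (p:ℤ) ≤ α
            · have := hPle p hpα
              omega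
            · rw [hval_gt p (by omega)]
              exact hfnoti1 _
        simp only [fTen, fCol]
        rw [if_pos hcond, if_pos hfh, Option.map_some]
        congr 1
        have hα' : alphaT ℓ (fMod i f) = α := by
          have hset : {p : ℤ | ∃ h : p ≤ ℓ, fMod i f ⟨p, h⟩ = p}
              = {p : ℤ | ∃ h : p ≤ ℓ, f ⟨p, h⟩ = p} := by
            ext p
            constructor
            · rintro ⟨hp, hv⟩
              refine ⟨hp, ?_⟩
              simp only [fMod] at hv
              split_ifs at hv with hc
              · have h8 : p + 1 ≤ f ⟨p, hp⟩ := hbig _ (show α < p by omega)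
                omega
              · exact hv
            · rintro ⟨hp, hv⟩
              refine ⟨hp, ?_⟩
              have h9 : p ≤ α := hαub ⟨p, hp⟩ hv
              have hne : f ⟨p, hp⟩ ≠ i := by omega
              simp only [fMod, if_neg hne]
              exact hv
          exact congrArg sSup hset
        funext p
        simp only [PiMap, fMod, hα', ← hαdef]
        by_cases h3 : (p:ℤ) ≤ α
        · have hgb : g ⟨(p:ℤ), p.2.1⟩ ≤ (p:ℤ) := hgid _
          have hff : f ⟨(p:ℤ), p.2.2⟩ = (p:ℤ) := hfix _ h3
          split_ifs <;> omega
        · split_ifs <;> omega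
    · by_cases hfg : fApp i g
      · -- f̃ acts on the second factor
        obtain ⟨⟨q, hq⟩, hgnoti1⟩ := id hfg
        have hi2β : i + 2 ≤ β := by
          by_contra hc
          push_neg at hc
          exact hgnoti1 ⟨i + 1, show (1:ℤ) ≤ i + 1 by omega⟩
            (hgfix ⟨i + 1, show (1:ℤ) ≤ i + 1 by omega⟩ (show β ≤ i + 1 by omega))
        have hqβ : (q:ℤ) < β := by
          by_contra hc
          push_neg at hc
          have := hgfix q hc
          omega
        have hqα : (q:ℤ) ≤ α := by omega
        have hfh : fApp i (PiMap ℓ (f, g)) := by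
          refine ⟨⟨⟨(q:ℤ), ⟨q.2, show (q:ℤ) ≤ ℓ by omega⟩⟩, ?_⟩, ?_⟩
          · rw [hval_le _ (show (q:ℤ) ≤ α from hqα)]
            exact hq
          · intro p
            by_cases hpα : (p:ℤ) ≤ α
            · rw [hval_le p hpα]
              exact hgnoti1 _
            · have := hPgt p (by omega)
              omega
        simp only [fTen, fCol]
        rw [if_neg hcond, if_pos hfg, if_pos hfh, Option.map_some]
        congr 1
        funext p
        simp only [PiMap, fMod, ← hαdef]
        by_cases hpα : (p:ℤ) ≤ α
        · split_ifs <;> omega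
        · have hfb : α + 2 ≤ f ⟨(p:ℤ), p.2.2⟩ := hflarge _ (show α < (p:ℤ) by omega)
          split_ifs <;> omega
      · -- f̃ kills everything
        have hnfh : ¬ fApp i (PiMap ℓ (f, g)) := by
          rintro ⟨⟨p, hp⟩, hnoti1⟩
          by_cases hpα : (p:ℤ) ≤ α
          · rw [hval_le p hpα] at hp
            have h0 : g ⟨(p:ℤ), p.2.1⟩ ≤ (p:ℤ) := hgid _
            obtain ⟨r, hr⟩ : ∃ r, g r = i + 1 := by
              by_contra hno
              push_neg at hno
              exact hfg ⟨⟨⟨(p:ℤ), p.2.1⟩, hp⟩, hno⟩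
            have hrα : α < (r:ℤ) := by
              by_contra hc
              push_neg at hc
              refine hnoti1 ⟨(r:ℤ), ⟨r.2, show (r:ℤ) ≤ ℓ by omega⟩⟩ ?_
              rw [hval_le _ (show (r:ℤ) ≤ α by omega)]
              exact hr
            have hgr : g r = (r:ℤ) := hgfix r (by omega)
            have hieq : i = α := by omega
            have hfif : fApp i f := by
              refine ⟨⟨⟨α, hαℓ⟩, by rw [hfα]; omega⟩, ?_⟩
              intro s hs
              exact hnoα1 s (by omega)
            have heg : eApp i g := by
              by_contra hce
              exact hcond ⟨hfif, hce⟩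
            exact heg.2 ⟨(p:ℤ), p.2.1⟩ hp
          · rw [hval_gt p (by omega)] at hp
            have hfb : α + 2 ≤ f ⟨(p:ℤ), p.2.2⟩ := hflarge _ (show α < (p:ℤ) by omega)
            have hfif : fApp i f := by
              refine ⟨⟨⟨(p:ℤ), p.2.2⟩, hp⟩, ?_⟩
              intro s hs
              by_cases hsα : (s:ℤ) ≤ α
              · have := hfsmall s hsα
                omega
              · refine hnoti1 ⟨(s:ℤ), ⟨show (1:ℤ) ≤ (s:ℤ) by omega, s.2⟩⟩ ?_
                rw [hval_gt _ (show α < (s:ℤ) by omega)]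
                exact hs
            have heg : eApp i g := by
              by_contra hce
              exact hcond ⟨hfif, hce⟩
            exact heg.2 ⟨i, show (1:ℤ) ≤ i by omega⟩ (hgfix ⟨i, show (1:ℤ) ≤ i by omega⟩ (show β ≤ i by omega))
        simp only [fTen, fCol]
        rw [if_neg hcond, if_neg hfg, if_neg hnfh]
        rfl
end
end

section
/- Fix ℓ, k ≥ 1 and let T^e be the ℓ×k tableau with T_{i,j} = i for all (i,j). In the crystal T_{[1,ℓ]×[1,k]} of semi-standard tableaux of rectangular shape ℓ×k, the Weyl-group orbit W·T^e consists exactly of the semi-standard tableaux T = (T_{i,j}) whose rows are constant, i.e. T_{i,1} = T_{i,2} = ⋯ = T_{i,k} for all 1 ≤ i ≤ ℓ. -/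
attribute [local instance] Classical.propDecidable

noncomputable section

/-- Column `c` of the tableau contributes a `+` to the `i`-signature: it contains
an entry `i` but no entry `i+1`. -/
def colPlus {ℓ k : ℕ} (i : ℤ) (T : Fin ℓ → Fin k → ℤ) (c : Fin k) : Prop :=
  (∃ r, T r c = i) ∧ ∀ r, T r c ≠ i + 1

/-- Column `c` of the tableau contributes a `−` to the `i`-signature: it contains
an entry `i+1` but no entry `i`. -/
def colMinus {ℓ k : ℕ} (i : ℤ) (T : Fin ℓ → Fin k → ℤ) (c : Fin k) : Prop :=
  (∃ r, T r c = i + 1) ∧ ∀ r, T r c ≠ i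

/-- Column `c` carries a `+` surviving the signature cancellation: every interval
to its right contains at least as many `+`'s as `−`'s. -/
def fCand {ℓ k : ℕ} (i : ℤ) (T : Fin ℓ → Fin k → ℤ) (c : Fin k) : Prop :=
  colPlus i T c ∧ ∀ c', c < c' →
    ((Finset.Ioc c c').filter (fun d => colMinus i T d)).card ≤
      ((Finset.Ioc c c').filter (fun d => colPlus i T d)).card

/-- Column `c` carries a `−` surviving the signature cancellation: every interval
to its left contains at least as many `−`'s as `+`'s. -/
def eCand {ℓ k : ℕ} (i : ℤ) (T : Fin ℓ → Fin k → ℤ) (c : Fin k) : Prop :=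
  colMinus i T c ∧ ∀ c', c' < c →
    ((Finset.Ico c' c).filter (fun d => colPlus i T d)).card ≤
      ((Finset.Ico c' c).filter (fun d => colMinus i T d)).card

/-- The Kashiwara operator `f̃_i` on rectangular tableaux via the signature rule:
change the entry `i` into `i+1` in the column carrying the leftmost surviving `+`;
`none` (i.e. `0`) if no `+` survives. -/
def fOp {ℓ k : ℕ} (i : ℤ) (T : Fin ℓ → Fin k → ℤ) : Option (Fin ℓ → Fin k → ℤ) :=
  if h : (Finset.univ.filter (fun c => fCand i T c)).Nonempty then
    some (fun r c =>
      if c = (Finset.univ.filter (fun c => fCand i T c)).min' h ∧ T r c = i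
      then i + 1 else T r c)
  else none

/-- The Kashiwara operator `ẽ_i` on rectangular tableaux via the signature rule:
change the entry `i+1` into `i` in the column carrying the rightmost surviving `−`;
`none` (i.e. `0`) if no `−` survives. -/
def eOp {ℓ k : ℕ} (i : ℤ) (T : Fin ℓ → Fin k → ℤ) : Option (Fin ℓ → Fin k → ℤ) :=
  if h : (Finset.univ.filter (fun c => eCand i T c)).Nonempty then
    some (fun r c =>
      if c = (Finset.univ.filter (fun c => eCand i T c)).max' h ∧ T r c = i + 1
      then i else T r c)
  else none

/-- The pairing `⟨wt(T), h_i⟩ = #{entries = i} − #{entries = i+1}`. -/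
def wtPair {ℓ k : ℕ} (i : ℤ) (T : Fin ℓ → Fin k → ℤ) : ℤ :=
  ((Finset.univ.filter (fun rc : Fin ℓ × Fin k => T rc.1 rc.2 = i)).card : ℤ) -
    ((Finset.univ.filter (fun rc : Fin ℓ × Fin k => T rc.1 rc.2 = i + 1)).card : ℤ)

/-- `k`-fold iteration of a partial operator. -/
def iterOpt {γ : Type*} (op : γ → Option γ) : ℕ → γ → Option γ
  | 0, x => some x
  | n + 1, x => (op x).bind (iterOpt op n)

/-- The string (extremal) operator
`S_i(T) = f̃_i^{⟨wt T, h_i⟩}(T)` if `⟨wt T, h_i⟩ ≥ 0`, else `ẽ_i^{−⟨wt T, h_i⟩}(T)`. -/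
def SOp {ℓ k : ℕ} (i : ℤ) (T : Fin ℓ → Fin k → ℤ) : Option (Fin ℓ → Fin k → ℤ) :=
  if 0 ≤ wtPair i T then iterOpt (fOp i) (wtPair i T).toNat T
  else iterOpt (eOp i) (-wtPair i T).toNat T

/-- The tableau `T^e` of shape `ℓ × k` with `T_{i,j} = i` for all `(i,j)`. -/
def Te (ℓ k : ℕ) : Fin ℓ → Fin k → ℤ := fun r _ => (r : ℤ) + 1

namespace WeylAux

open Finset

variable {ℓ k : ℕ}

/-- Constant-row tableau built from a column vector. -/
def tab (k : ℕ) (a : Fin ℓ → ℤ) : Fin ℓ → Fin k → ℤ := fun r _ => a r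

/-! ### weight computations -/

lemma filter_fst_card (p : Fin ℓ → Prop) :
    ((Finset.univ : Finset (Fin ℓ × Fin k)).filter (fun rc => p rc.1)).card
      = ((Finset.univ : Finset (Fin ℓ)).filter p).card * k := by
  have h : ((Finset.univ : Finset (Fin ℓ × Fin k)).filter (fun rc => p rc.1))
      = ((Finset.univ : Finset (Fin ℓ)).filter p) ×ˢ (Finset.univ : Finset (Fin k)) := by
    ext rc
    simp [Finset.mem_filter, Finset.mem_product]
  rw [h, Finset.card_product, Finset.card_univ, Fintype.card_fin]

lemma filter_eq_singleton {a : Fin ℓ → ℤ} (hinj : Function.Injective a) {r : Fin ℓ} {j : ℤ}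
    (h : a r = j) : (Finset.univ.filter (fun r' => a r' = j)).card = 1 := by
  have : (Finset.univ.filter (fun r' => a r' = j)) = {r} := by
    ext r'
    simp only [Finset.mem_filter, Finset.mem_univ, true_and, Finset.mem_singleton]
    constructor
    · intro hr; exact hinj (hr.trans h.symm)
    · rintro rfl; exact h
  rw [this, Finset.card_singleton]

lemma filter_eq_empty' {a : Fin ℓ → ℤ} {j : ℤ} (h : ∀ r', a r' ≠ j) :
    (Finset.univ.filter (fun r' => a r' = j)).card = 0 := by
  rw [Finset.card_eq_zero, Finset.filter_eq_empty_iff]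
  intro r' _; exact h r'

lemma wt_tab (i : ℤ) (a : Fin ℓ → ℤ) :
    wtPair i (tab k a)
      = ((Finset.univ.filter (fun r' => a r' = i)).card : ℤ) * k
        - ((Finset.univ.filter (fun r' => a r' = i + 1)).card : ℤ) * k := by
  have e : ∀ j : ℤ, ((Finset.univ : Finset (Fin ℓ × Fin k)).filter
      (fun rc => tab k a rc.1 rc.2 = j))
      = (Finset.univ.filter (fun r' => a r' = j)) ×ˢ (Finset.univ : Finset (Fin k)) := by
    intro j
    ext rc
    simp only [Finset.mem_filter, Finset.mem_product, Finset.mem_univ, true_and, and_true, tab]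
    exact Finset.mem_filter.trans (and_iff_right (Finset.mem_univ _))
  show ((Finset.univ.filter (fun rc : Fin ℓ × Fin k => tab k a rc.1 rc.2 = i)).card : ℤ)
      - ((Finset.univ.filter (fun rc : Fin ℓ × Fin k => tab k a rc.1 rc.2 = i + 1)).card : ℤ) = _
  rw [e i, e (i + 1), Finset.card_product, Finset.card_product, Finset.card_univ,
    Fintype.card_fin]
  push_cast
  ring

/-! ### the f-chain -/

section fchain

variable (i : ℤ) (a : Fin ℓ → ℤ) (r : Fin ℓ)

/-- Intermediate tableau after `m` applications of `f̃_i` to `tab a`. -/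
def Am (i : ℤ) (a : Fin ℓ → ℤ) (r : Fin ℓ) (m : ℕ) : Fin ℓ → Fin k → ℤ :=
  fun r' c => if r' = r ∧ (c : ℕ) < m then i + 1 else a r'

variable {i a r}
variable (hinj : Function.Injective a) (hi : a r = i) (h2 : ∀ r', a r' ≠ i + 1)

include hinj hi in
lemma Am_eq_i {m : ℕ} {r' : Fin ℓ} {c : Fin k} :
    Am i a r m r' c = i ↔ r' = r ∧ m ≤ (c : ℕ) := by
  unfold Am
  split_ifs with h
  · constructor
    · intro he; omega
    · intro he; omega
  · constructor
    · intro he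
      have hr : r' = r := hinj (he.trans hi.symm)
      exact ⟨hr, by omega⟩
    · rintro ⟨rfl, _⟩; exact hi

include h2 in
lemma Am_eq_i1 {m : ℕ} {r' : Fin ℓ} {c : Fin k} :
    Am i a r m r' c = i + 1 ↔ r' = r ∧ (c : ℕ) < m := by
  unfold Am
  split_ifs with h
  · simp [h]
  · constructor
    · intro he; exact absurd he (h2 r')
    · intro he; exact absurd he h

include hinj hi h2 in
lemma colPlus_Am {m : ℕ} {c : Fin k} : colPlus i (Am i a r m) c ↔ m ≤ (c : ℕ) := by
  unfold colPlus
  constructor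
  · rintro ⟨⟨r', hr'⟩, -⟩
    exact ((Am_eq_i hinj hi).mp hr').2
  · intro hc
    refine ⟨⟨r, (Am_eq_i hinj hi).mpr ⟨rfl, hc⟩⟩, ?_⟩
    intro r' he
    have := ((Am_eq_i1 h2).mp he).2
    omega

include hinj hi h2 in
lemma colMinus_Am {m : ℕ} {c : Fin k} : colMinus i (Am i a r m) c ↔ (c : ℕ) < m := by
  unfold colMinus
  constructor
  · rintro ⟨⟨r', hr'⟩, -⟩
    exact ((Am_eq_i1 h2).mp hr').2
  · intro hc
    refine ⟨⟨r, (Am_eq_i1 h2).mpr ⟨rfl, hc⟩⟩, ?_⟩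
    intro r' he
    have := ((Am_eq_i hinj hi).mp he).2
    omega

include hinj hi h2 in
lemma fCand_Am {m : ℕ} {c : Fin k} : fCand i (Am i a r m) c ↔ m ≤ (c : ℕ) := by
  unfold fCand
  constructor
  · rintro ⟨hp, -⟩
    exact (colPlus_Am hinj hi h2).mp hp
  · intro hc
    refine ⟨(colPlus_Am hinj hi h2).mpr hc, ?_⟩
    intro c' hcc'
    have : ((Finset.Ioc c c').filter (fun d => colMinus i (Am i a r m) d)) = ∅ := by
      rw [Finset.filter_eq_empty_iff]
      intro d hd hm
      have h1 : c < d := (Finset.mem_Ioc.mp hd).1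
      have h2' := (colMinus_Am hinj hi h2).mp hm
      have : (c : ℕ) < (d : ℕ) := h1
      omega
    rw [this]
    simp

include hinj hi h2 in
lemma fOp_Am {m : ℕ} (hm : m < k) :
    fOp i (Am (k := k) i a r m) = some (Am i a r (m + 1)) := by
  have hsEq : (Finset.univ.filter (fun c => fCand i (Am (k := k) i a r m) c))
      = (Finset.univ.filter (fun c : Fin k => m ≤ (c : ℕ))) := by
    ext c
    simp only [Finset.mem_filter, Finset.mem_univ, true_and]
    exact fCand_Am hinj hi h2
  have hmem : (⟨m, hm⟩ : Fin k) ∈ Finset.univ.filter (fun c => fCand i (Am (k := k) i a r m) c) := by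
    rw [hsEq]; simp
  have hne : (Finset.univ.filter (fun c => fCand i (Am (k := k) i a r m) c)).Nonempty :=
    ⟨_, hmem⟩
  have hmin : (Finset.univ.filter (fun c => fCand i (Am (k := k) i a r m) c)).min' hne
      = (⟨m, hm⟩ : Fin k) := by
    have h1 := Finset.min'_mem _ hne
    rw [Finset.mem_filter] at h1
    have hub : m ≤ (((Finset.univ.filter
        (fun c => fCand i (Am (k := k) i a r m) c)).min' hne : Fin k) : ℕ) :=
      (fCand_Am hinj hi h2).mp h1.2
    have hlb := Finset.min'_le _ _ hmem
    rw [Fin.le_def] at hlb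
    apply Fin.ext
    simp only [Fin.val_mk] at hlb ⊢
    omega
  rw [fOp, dif_pos hne]
  congr 1
  funext r' c
  rw [hmin]
  by_cases hr : r' = r
  · by_cases hc : (c : ℕ) = m
    · have hceq : c = (⟨m, hm⟩ : Fin k) := Fin.ext hc
      rw [if_pos ⟨hceq, (Am_eq_i hinj hi).mpr ⟨hr, by omega⟩⟩]
      unfold Am
      rw [if_pos ⟨hr, by omega⟩]
    · have hcne : ¬(c = (⟨m, hm⟩ : Fin k) ∧ Am i a r m r' c = i) := by
        rintro ⟨hce, -⟩
        exact hc (congrArg Fin.val hce)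
      rw [if_neg hcne]
      unfold Am
      by_cases h3 : (c : ℕ) < m
      · rw [if_pos ⟨hr, h3⟩, if_pos ⟨hr, by omega⟩]
      · rw [if_neg (by tauto), if_neg (by rintro ⟨-, h4⟩; omega)]
  · have hcne : ¬(c = (⟨m, hm⟩ : Fin k) ∧ Am i a r m r' c = i) := by
      rintro ⟨-, he⟩
      exact hr ((Am_eq_i hinj hi).mp he).1
    rw [if_neg hcne]
    unfold Am
    rw [if_neg (by tauto), if_neg (by tauto)]

include hinj hi h2 in
lemma iter_f_Am : ∀ j m : ℕ, m + j ≤ k →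
    iterOpt (fOp i) j (Am (k := k) i a r m) = some (Am i a r (m + j))
  | 0, m, _ => by simp [iterOpt]
  | j + 1, m, h => by
    rw [iterOpt, fOp_Am hinj hi h2 (by omega), Option.bind_some,
      iter_f_Am j (m + 1) (by omega)]
    have hmj : m + 1 + j = m + (j + 1) := by omega
    rw [hmj]

include hinj hi h2 in
lemma SOp_tab_f (hk : 1 ≤ k) :
    SOp i (tab k a) = some (tab k (Function.update a r (i + 1))) := by
  have hwt : wtPair i (tab (ℓ := ℓ) k a) = (k : ℤ) := by
    rw [wt_tab, filter_eq_singleton hinj hi, filter_eq_empty' h2]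
    push_cast; ring
  have hA0 : tab k a = Am (k := k) i a r 0 := by
    funext r' c; unfold tab Am; rw [if_neg (by omega)]
  have hAk : Am (k := k) i a r k = tab k (Function.update a r (i + 1)) := by
    funext r' c
    unfold tab Am
    rw [Function.update_apply]
    by_cases hr : r' = r
    · rw [if_pos ⟨hr, c.isLt⟩, if_pos hr]
    · rw [if_neg (by tauto), if_neg hr]
  rw [SOp, hwt, if_pos (by positivity), hA0]
  have := iter_f_Am (k := k) hinj hi h2 k 0 (by omega)
  simpa [hAk] using this

end fchain

/-! ### the e-chain -/

section echain

variable {i : ℤ} {a : Fin ℓ → ℤ} {r : Fin ℓ}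

/-- Intermediate tableau after `m` applications of `ẽ_i` to `tab a`. -/
def Bm (i : ℤ) (a : Fin ℓ → ℤ) (r : Fin ℓ) (m : ℕ) : Fin ℓ → Fin k → ℤ :=
  fun r' c => if r' = r ∧ k - m ≤ (c : ℕ) then i else a r'

variable (hinj : Function.Injective a) (hi : a r = i + 1) (h2 : ∀ r', a r' ≠ i)

include hinj hi in
lemma Bm_eq_i1 {m : ℕ} {r' : Fin ℓ} {c : Fin k} :
    Bm i a r m r' c = i + 1 ↔ r' = r ∧ (c : ℕ) < k - m := by
  unfold Bm
  split_ifs with h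
  · constructor
    · intro he; omega
    · intro he; omega
  · constructor
    · intro he
      have hr : r' = r := hinj (he.trans hi.symm)
      exact ⟨hr, by omega⟩
    · rintro ⟨rfl, _⟩; exact hi

include h2 in
lemma Bm_eq_i {m : ℕ} {r' : Fin ℓ} {c : Fin k} :
    Bm i a r m r' c = i ↔ r' = r ∧ k - m ≤ (c : ℕ) := by
  unfold Bm
  split_ifs with h
  · simp [h]
  · constructor
    · intro he; exact absurd he (h2 r')
    · intro he; exact absurd he h

include hinj hi h2 in
lemma colMinus_Bm {m : ℕ} {c : Fin k} : colMinus i (Bm i a r m) c ↔ (c : ℕ) < k - m := by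
  unfold colMinus
  constructor
  · rintro ⟨⟨r', hr'⟩, -⟩
    exact ((Bm_eq_i1 hinj hi).mp hr').2
  · intro hc
    refine ⟨⟨r, (Bm_eq_i1 hinj hi).mpr ⟨rfl, hc⟩⟩, ?_⟩
    intro r' he
    have := ((Bm_eq_i h2).mp he).2
    omega

include hinj hi h2 in
lemma colPlus_Bm {m : ℕ} {c : Fin k} : colPlus i (Bm i a r m) c ↔ k - m ≤ (c : ℕ) := by
  unfold colPlus
  constructor
  · rintro ⟨⟨r', hr'⟩, -⟩
    exact ((Bm_eq_i h2).mp hr').2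
  · intro hc
    refine ⟨⟨r, (Bm_eq_i h2).mpr ⟨rfl, hc⟩⟩, ?_⟩
    intro r' he
    have := ((Bm_eq_i1 hinj hi).mp he).2
    omega

include hinj hi h2 in
lemma eCand_Bm {m : ℕ} {c : Fin k} : eCand i (Bm i a r m) c ↔ (c : ℕ) < k - m := by
  unfold eCand
  constructor
  · rintro ⟨hp, -⟩
    exact (colMinus_Bm hinj hi h2).mp hp
  · intro hc
    refine ⟨(colMinus_Bm hinj hi h2).mpr hc, ?_⟩
    intro c' hcc'
    have : ((Finset.Ico c' c).filter (fun d => colPlus i (Bm i a r m) d)) = ∅ := by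
      rw [Finset.filter_eq_empty_iff]
      intro d hd hm
      have h1 : d < c := (Finset.mem_Ico.mp hd).2
      have h2' := (colPlus_Bm hinj hi h2).mp hm
      have : (d : ℕ) < (c : ℕ) := h1
      omega
    rw [this]
    simp

include hinj hi h2 in
lemma eOp_Bm {m : ℕ} (hm : m < k) :
    eOp i (Bm (k := k) i a r m) = some (Bm i a r (m + 1)) := by
  have hklt : k - m - 1 < k := by omega
  have hsEq : (Finset.univ.filter (fun c => eCand i (Bm (k := k) i a r m) c))
      = (Finset.univ.filter (fun c : Fin k => (c : ℕ) < k - m)) := by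
    ext c
    simp only [Finset.mem_filter, Finset.mem_univ, true_and]
    exact eCand_Bm hinj hi h2
  have hmem : (⟨k - m - 1, hklt⟩ : Fin k) ∈
      Finset.univ.filter (fun c => eCand i (Bm (k := k) i a r m) c) := by
    rw [hsEq]; simp; omega
  have hne : (Finset.univ.filter (fun c => eCand i (Bm (k := k) i a r m) c)).Nonempty :=
    ⟨_, hmem⟩
  have hmax : (Finset.univ.filter (fun c => eCand i (Bm (k := k) i a r m) c)).max' hne
      = (⟨k - m - 1, hklt⟩ : Fin k) := by
    have h1 := Finset.max'_mem _ hne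
    rw [Finset.mem_filter] at h1
    have hub : (((Finset.univ.filter
        (fun c => eCand i (Bm (k := k) i a r m) c)).max' hne : Fin k) : ℕ) < k - m :=
      (eCand_Bm hinj hi h2).mp h1.2
    have hlb := Finset.le_max' _ _ hmem
    rw [Fin.le_def] at hlb
    apply Fin.ext
    simp only [Fin.val_mk] at hlb ⊢
    omega
  rw [eOp, dif_pos hne]
  congr 1
  funext r' c
  rw [hmax]
  by_cases hr : r' = r
  · by_cases hc : (c : ℕ) = k - m - 1
    · have hceq : c = (⟨k - m - 1, hklt⟩ : Fin k) := Fin.ext hc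
      rw [if_pos ⟨hceq, (Bm_eq_i1 hinj hi).mpr ⟨hr, by omega⟩⟩]
      unfold Bm
      rw [if_pos ⟨hr, by omega⟩]
    · have hcne : ¬(c = (⟨k - m - 1, hklt⟩ : Fin k) ∧ Bm i a r m r' c = i + 1) := by
        rintro ⟨hce, -⟩
        exact hc (congrArg Fin.val hce)
      rw [if_neg hcne]
      unfold Bm
      by_cases h3 : k - m ≤ (c : ℕ)
      · rw [if_pos ⟨hr, h3⟩, if_pos ⟨hr, by omega⟩]
      · rw [if_neg (by tauto), if_neg (by rintro ⟨-, h4⟩; omega)]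
  · have hcne : ¬(c = (⟨k - m - 1, hklt⟩ : Fin k) ∧ Bm i a r m r' c = i + 1) := by
      rintro ⟨-, he⟩
      exact hr ((Bm_eq_i1 hinj hi).mp he).1
    rw [if_neg hcne]
    unfold Bm
    rw [if_neg (by tauto), if_neg (by tauto)]

include hinj hi h2 in
lemma iter_e_Bm : ∀ j m : ℕ, m + j ≤ k →
    iterOpt (eOp i) j (Bm (k := k) i a r m) = some (Bm i a r (m + j))
  | 0, m, _ => by simp [iterOpt]
  | j + 1, m, h => by
    rw [iterOpt, eOp_Bm hinj hi h2 (by omega), Option.bind_some,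
      iter_e_Bm j (m + 1) (by omega)]
    have hmj : m + 1 + j = m + (j + 1) := by omega
    rw [hmj]

include hinj hi h2 in
lemma SOp_tab_e (hk : 1 ≤ k) :
    SOp i (tab k a) = some (tab k (Function.update a r i)) := by
  have hwt : wtPair i (tab (ℓ := ℓ) k a) = -(k : ℤ) := by
    rw [wt_tab, filter_eq_singleton hinj hi, filter_eq_empty' h2]
    push_cast; ring
  have hB0 : tab k a = Bm (k := k) i a r 0 := by
    funext r' c
    unfold tab Bm
    rw [if_neg (by rintro ⟨-, h⟩; have := c.isLt; omega)]
  have hBk : Bm (k := k) i a r k = tab k (Function.update a r i) := by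
    funext r' c
    unfold tab Bm
    rw [Function.update_apply]
    by_cases hr : r' = r
    · rw [if_pos ⟨hr, by omega⟩, if_pos hr]
    · rw [if_neg (by tauto), if_neg hr]
  rw [SOp, hwt, if_neg (by omega), hB0]
  have := iter_e_Bm (k := k) hinj hi h2 k 0 (by omega)
  simpa [hBk] using this

end echain

/-! ### the identity cases -/

lemma SOp_eq_self {i : ℤ} {T : Fin ℓ → Fin k → ℤ} (h : wtPair i T = 0) :
    SOp i T = some T := by
  rw [SOp, h]
  simp [iterOpt]

lemma SOp_tab_id_both {i : ℤ} {a : Fin ℓ → ℤ} (hinj : Function.Injective a)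
    {r r' : Fin ℓ} (hi : a r = i) (hi1 : a r' = i + 1) :
    SOp i (tab k a) = some (tab k a) := by
  apply SOp_eq_self
  rw [wt_tab, filter_eq_singleton hinj hi, filter_eq_singleton hinj hi1]
  ring

lemma SOp_tab_id_neither {i : ℤ} {a : Fin ℓ → ℤ} (h : ∀ r', a r' ≠ i)
    (h1 : ∀ r', a r' ≠ i + 1) :
    SOp i (tab k a) = some (tab k a) := by
  apply SOp_eq_self
  rw [wt_tab, filter_eq_empty' h, filter_eq_empty' h1]
  ring

/-! ### the invariant -/

/-- The "constant rows, strictly increasing columns" property. -/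
def Good (T : Fin ℓ → Fin k → ℤ) : Prop :=
  (∀ c : Fin k, StrictMono (fun r => T r c)) ∧
    ∀ (r : Fin ℓ) (c c' : Fin k), T r c = T r c'

lemma good_tab {a : Fin ℓ → ℤ} (ha : StrictMono a) : Good (tab k a) := by
  refine ⟨fun c => ?_, fun r c c' => rfl⟩
  intro s t hst
  exact ha hst

lemma good_iff_tab (hk : 1 ≤ k) {T : Fin ℓ → Fin k → ℤ} :
    Good T ↔ ∃ a : Fin ℓ → ℤ, StrictMono a ∧ T = tab k a := by
  constructor
  · rintro ⟨h1, h2⟩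
    refine ⟨fun r => T r ⟨0, hk⟩, h1 _, ?_⟩
    funext r c
    exact h2 r c ⟨0, hk⟩
  · rintro ⟨a, ha, rfl⟩
    exact good_tab ha

lemma update_strictMono_up {a : Fin ℓ → ℤ} (ha : StrictMono a) {r : Fin ℓ}
    (h2 : ∀ r', a r' ≠ a r + 1) : StrictMono (Function.update a r (a r + 1)) := by
  intro s t hst
  rw [Function.update_apply, Function.update_apply]
  by_cases hs : s = r
  · rw [if_pos hs]
    by_cases ht : t = r
    · exfalso; rw [hs, ht] at hst; exact lt_irrefl r hst
    · rw [if_neg ht]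
      have h3 : a r < a t := by rw [← hs]; exact ha hst
      have h4 := h2 t
      omega
  · rw [if_neg hs]
    by_cases ht : t = r
    · rw [if_pos ht]
      have h3 : a s < a r := by rw [← ht]; exact ha hst
      omega
    · rw [if_neg ht]
      exact ha hst

lemma update_strictMono_down {a : Fin ℓ → ℤ} (ha : StrictMono a) {r : Fin ℓ}
    (h2 : ∀ r', a r' ≠ a r - 1) : StrictMono (Function.update a r (a r - 1)) := by
  intro s t hst
  rw [Function.update_apply, Function.update_apply]
  by_cases hs : s = r
  · rw [if_pos hs]
    by_cases ht : t = r
    · exfalso; rw [hs, ht] at hst; exact lt_irrefl r hst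
    · rw [if_neg ht]
      have h3 : a r < a t := by rw [← hs]; exact ha hst
      omega
  · rw [if_neg hs]
    by_cases ht : t = r
    · rw [if_pos ht]
      have h3 : a s < a r := by rw [← ht]; exact ha hst
      have h4 := h2 s
      omega
    · rw [if_neg ht]
      exact ha hst

lemma good_step (hk : 1 ≤ k) {A B : Fin ℓ → Fin k → ℤ} (hA : Good A) {i : ℤ}
    (hS : SOp i A = some B) : Good B := by
  obtain ⟨a, ha, rfl⟩ := (good_iff_tab hk).mp hA
  have hinj := ha.injective
  by_cases hpi : ∃ r, a r = i
  · obtain ⟨r, hr⟩ := hpi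
    by_cases hpi1 : ∃ r', a r' = i + 1
    · obtain ⟨r', hr'⟩ := hpi1
      have := (SOp_tab_id_both (k := k) hinj hr hr').symm.trans hS
      rw [Option.some_inj] at this
      rw [← this]
      exact good_tab ha
    · push_neg at hpi1
      have := (SOp_tab_f (k := k) hinj hr hpi1 hk).symm.trans hS
      rw [Option.some_inj] at this
      rw [← this]
      apply good_tab
      have : ∀ r', a r' ≠ a r + 1 := by rw [hr]; exact hpi1
      have h5 := update_strictMono_up ha this
      rwa [hr] at h5
  · push_neg at hpi
    by_cases hpi1 : ∃ r', a r' = i + 1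
    · obtain ⟨r', hr'⟩ := hpi1
      have := (SOp_tab_e (k := k) hinj hr' hpi hk).symm.trans hS
      rw [Option.some_inj] at this
      rw [← this]
      apply good_tab
      have h6 : ∀ r'', a r'' ≠ a r' - 1 := by
        intro r'' h; apply hpi r''; omega
      have h5 := update_strictMono_down ha h6
      have h7 : a r' - 1 = i := by omega
      rwa [h7] at h5
    · push_neg at hpi1
      have := (SOp_tab_id_neither (k := k) hpi hpi1).symm.trans hS
      rw [Option.some_inj] at this
      rw [← this]
      exact good_tab ha

/-! ### reachability -/

lemma reach (hk : 1 ≤ k) : ∀ (n : ℕ) (a b : Fin ℓ → ℤ), StrictMono a → StrictMono b →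
    (∑ r, (a r - b r).natAbs) = n →
    Relation.ReflTransGen (fun A B : Fin ℓ → Fin k → ℤ => ∃ i : ℤ, SOp i A = some B)
      (tab k a) (tab k b) := by
  intro n
  induction n using Nat.strong_induction_on with
  | _ n ih =>
    intro a b ha hb hsum
    by_cases hab : a = b
    · subst hab; exact Relation.ReflTransGen.refl
    · have hne : ∃ r, a r ≠ b r := by
        by_contra h
        push_neg at h
        exact hab (funext h)
      by_cases hcase : ∃ r, b r < a r
      · -- move down at minimal such r
        have hfne : (Finset.univ.filter (fun r => b r < a r)).Nonempty := by
          obtain ⟨r, hr⟩ := hcase; exact ⟨r, by simp [hr]⟩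
        set r := (Finset.univ.filter (fun r => b r < a r)).min' hfne with hrdef
        have hrmem : b r < a r := by
          have := Finset.min'_mem _ hfne
          rw [Finset.mem_filter] at this
          exact this.2
        have hrmin : ∀ r' : Fin ℓ, r' < r → a r' ≤ b r' := by
          intro r' hr'
          by_contra h
          push_neg at h
          have : r ≤ r' := Finset.min'_le _ _ (by simp [h])
          exact absurd hr' (not_lt.mpr this)
        have hhole : ∀ r', a r' ≠ a r - 1 := by
          intro r' h
          rcases lt_trichotomy r' r with hlt | heq | hgt
          · have h1 : a r' ≤ b r' := hrmin r' hlt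
            have h2 : b r' < b r := hb hlt
            omega
          · subst heq; omega
          · have := ha hgt; omega
        set a' := Function.update a r (a r - 1) with ha'def
        have ha' : StrictMono a' := update_strictMono_down ha hhole
        have hstep : SOp (a r - 1) (tab k a) = some (tab k a') := by
          exact SOp_tab_e ha.injective (by omega) (fun r' h => hhole r' h) hk
        have hsum' : (∑ r', (a' r' - b r').natAbs) = n - 1 := by
          have h1 : ∑ r', (a' r' - b r').natAbs
              = (a r - 1 - b r).natAbs + ∑ r' ∈ Finset.univ \ {r}, (a r' - b r').natAbs := by
            rw [ha'def]
            rw [show (fun r' => (Function.update a r (a r - 1) r' - b r').natAbs)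
              = Function.update (fun r' => (a r' - b r').natAbs) r ((a r - 1 - b r).natAbs) by
                funext r'
                rw [Function.update_apply, Function.update_apply]
                split_ifs with h
                · subst h; rfl
                · rfl]
            exact Finset.sum_update_of_mem (Finset.mem_univ r) _ _
          have h2 : (∑ r', (a r' - b r').natAbs)
              = (a r - b r).natAbs + ∑ r' ∈ Finset.univ \ {r}, (a r' - b r').natAbs := by
            rw [← Finset.sum_update_of_mem (Finset.mem_univ r) (fun r' => (a r' - b r').natAbs)]
            congr 1
            funext r'
            rw [Function.update_apply]
            split_ifs with h
            · subst h; rfl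
            · rfl
          omega
        have hn1 : 1 ≤ n := by
          have : (a r - b r).natAbs ≤ ∑ r', (a r' - b r').natAbs :=
            Finset.single_le_sum (f := fun r' => (a r' - b r').natAbs)
              (fun _ _ => Nat.zero_le _) (Finset.mem_univ r)
          omega
        exact Relation.ReflTransGen.head ⟨a r - 1, hstep⟩
          (ih (n - 1) (by omega) a' b ha' hb hsum')
      · -- all a ≤ b, move up at maximal r with a r < b r
        push_neg at hcase
        have hcase2 : ∃ r, a r < b r := by
          obtain ⟨r, hr⟩ := hne
          exact ⟨r, lt_of_le_of_ne (hcase r) hr⟩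
        have hfne : (Finset.univ.filter (fun r => a r < b r)).Nonempty := by
          obtain ⟨r, hr⟩ := hcase2; exact ⟨r, by simp [hr]⟩
        set r := (Finset.univ.filter (fun r => a r < b r)).max' hfne with hrdef
        have hrmem : a r < b r := by
          have := Finset.max'_mem _ hfne
          rw [Finset.mem_filter] at this
          exact this.2
        have hrmax : ∀ r' : Fin ℓ, r < r' → a r' = b r' := by
          intro r' hr'
          have h1 : ¬(a r' < b r') := by
            intro h
            have : r' ≤ r := Finset.le_max' _ _ (by simp [h])
            exact absurd hr' (not_lt.mpr this)
          have := hcase r'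
          omega
        have hhole : ∀ r', a r' ≠ a r + 1 := by
          intro r' h
          rcases lt_trichotomy r' r with hlt | heq | hgt
          · have := ha hlt; omega
          · subst heq; omega
          · have h1 : a r' = b r' := hrmax r' hgt
            have h2 : b r < b r' := hb hgt
            omega
        set a' := Function.update a r (a r + 1) with ha'def
        have ha' : StrictMono a' := update_strictMono_up ha hhole
        have hstep : SOp (a r) (tab k a) = some (tab k a') := by
          exact SOp_tab_f ha.injective rfl hhole hk
        have hsum' : (∑ r', (a' r' - b r').natAbs) = n - 1 := by
          have h1 : ∑ r', (a' r' - b r').natAbs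
              = (a r + 1 - b r).natAbs + ∑ r' ∈ Finset.univ \ {r}, (a r' - b r').natAbs := by
            rw [ha'def]
            rw [show (fun r' => (Function.update a r (a r + 1) r' - b r').natAbs)
              = Function.update (fun r' => (a r' - b r').natAbs) r ((a r + 1 - b r).natAbs) by
                funext r'
                rw [Function.update_apply, Function.update_apply]
                split_ifs with h
                · subst h; rfl
                · rfl]
            exact Finset.sum_update_of_mem (Finset.mem_univ r) _ _
          have h2 : (∑ r', (a r' - b r').natAbs)
              = (a r - b r).natAbs + ∑ r' ∈ Finset.univ \ {r}, (a r' - b r').natAbs := by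
            rw [← Finset.sum_update_of_mem (Finset.mem_univ r) (fun r' => (a r' - b r').natAbs)]
            congr 1
            funext r'
            rw [Function.update_apply]
            split_ifs with h
            · subst h; rfl
            · rfl
          omega
        have hn1 : 1 ≤ n := by
          have : (a r - b r).natAbs ≤ ∑ r', (a r' - b r').natAbs :=
            Finset.single_le_sum (f := fun r' => (a r' - b r').natAbs)
              (fun _ _ => Nat.zero_le _) (Finset.mem_univ r)
          omega
        exact Relation.ReflTransGen.head ⟨a r, hstep⟩
          (ih (n - 1) (by omega) a' b ha' hb hsum')

end WeylAux

/-- In the crystal of semi-standard tableaux of rectangular shape `ℓ × k`, the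
Weyl group orbit `W · T^e` — the set of tableaux reachable from `T^e` by the string
operators `S_i` — consists exactly of the semi-standard tableaux with constant
rows, i.e. `T_{i,1} = T_{i,2} = ⋯ = T_{i,k}` for all `i` (and strictly increasing
columns). -/
theorem weyl_orbit_Te (ℓ k : ℕ) (hl : 1 ≤ ℓ) (hk : 1 ≤ k) (T : Fin ℓ → Fin k → ℤ) :
    Relation.ReflTransGen (fun A B => ∃ i : ℤ, SOp i A = some B) (Te ℓ k) T ↔
      ((∀ c : Fin k, StrictMono (fun r => T r c)) ∧
        ∀ (r : Fin ℓ) (c c' : Fin k), T r c = T r c') := by 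
  classical
  have hTe : Te ℓ k = WeylAux.tab k (fun r : Fin ℓ => (r : ℤ) + 1) := rfl
  have hmono : StrictMono (fun r : Fin ℓ => (r : ℤ) + 1) := by
    intro s t hst
    simp only [add_lt_add_iff_right]
    exact_mod_cast hst
  constructor
  · intro h
    have hgood : WeylAux.Good T := by
      induction h with
      | refl =>
        rw [hTe]
        exact WeylAux.good_tab hmono
      | tail _ hstep ih =>
        obtain ⟨i, hi⟩ := hstep
        exact WeylAux.good_step hk ih hi
    exact hgood
  · intro hgood
    obtain ⟨b, hb, rfl⟩ := (WeylAux.good_iff_tab hk).mp hgood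
    rw [hTe]
    exact WeylAux.reach hk _ _ _ hmono hb rfl
end
end

section
/- Let ℓ ≥ 1. The set M(Y_{ℓ,a} Y_{0,aq^ℓ}^{-1}) = { m_T = ∏_{1≤j≤ℓ} ⟦i_j⟧_{aq^{ℓ+1−2j}} : T = (i_1 < ⋯ < i_ℓ) ∈ T_{[1,ℓ]} } satisfies: the map T ↦ m_T is injective, i.e. distinct strictly increasing ℓ-tuples give distinct monomials. -/
noncomputable section

/-- The monomial `⟦j⟧_c = Y_{j−1, c q^j}^{−1} Y_{j, c q^{j−1}}` in the free abelian
group `A` on the symbols `Y_{i,c}` (`i ∈ ℤ`, `c ∈ ℂ*`), written additively as an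
element of `(ℤ × ℂ) →₀ ℤ`. -/
def boxMon (q : ℂ) (j : ℤ) (c : ℂ) : (ℤ × ℂ) →₀ ℤ :=
  Finsupp.single (j - 1, c * q ^ j) (-1) + Finsupp.single (j, c * q ^ (j - 1)) 1

/-- The monomial `m_T = ∏_{1 ≤ j ≤ ℓ} ⟦i_j⟧_{a q^{ℓ+1−2j}}` attached to an
`ℓ`-tuple `T = (i_1, …, i_ℓ)`. -/
def mMon (q a : ℂ) (ℓ : ℕ) (t : Fin ℓ → ℤ) : (ℤ × ℂ) →₀ ℤ :=
  ∑ j : Fin ℓ, boxMon q (t j) (a * q ^ ((ℓ : ℤ) + 1 - 2 * ((j : ℤ) + 1)))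

/-- Integer shadow of `mMon`: record only the exponent of `q`. -/
def MZ (ℓ : ℕ) (v : Fin ℓ → ℤ) : (ℤ × ℤ) →₀ ℤ :=
  ∑ i : Fin ℓ, (Finsupp.single (v i - 1, (ℓ : ℤ) - 1 - 2 * (i : ℤ) + v i) (-1 : ℤ)
    + Finsupp.single (v i, (ℓ : ℤ) - 2 - 2 * (i : ℤ) + v i) (1 : ℤ))

lemma MZ_apply (ℓ : ℕ) (v : Fin ℓ → ℤ) (p : ℤ × ℤ) :
    MZ ℓ v p = ∑ i : Fin ℓ,
      ((if v i - 1 = p.1 ∧ (ℓ : ℤ) - 1 - 2 * (i : ℤ) + v i = p.2 then (-1 : ℤ) else 0)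
        + (if v i = p.1 ∧ (ℓ : ℤ) - 2 - 2 * (i : ℤ) + v i = p.2 then (1 : ℤ) else 0)) := by
  rw [MZ, Finsupp.finset_sum_apply]
  refine Finset.sum_congr rfl fun i _ => ?_
  simp only [Finsupp.add_apply, Finsupp.single_apply, Prod.ext_iff]

/-- Injectivity of the integer shadow (no monotonicity needed). -/
lemma MZ_injective (ℓ : ℕ) (t u : Fin ℓ → ℤ) (h : MZ ℓ t = MZ ℓ u) : t = u := by
  have key : ∀ j : Fin ℓ, (∀ k : Fin ℓ, j < k → t k = u k) → t j = u j := by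
    intro j IH
    have hp := DFunLike.congr_fun h (t j, (ℓ : ℤ) - 2 - 2 * (j : ℤ) + t j)
    rw [MZ_apply, MZ_apply] at hp
    -- rewrite each side into canonical form
    have ht' : ∀ i : Fin ℓ,
        ((if t i - 1 = t j ∧ (ℓ : ℤ) - 1 - 2 * (i : ℤ) + t i = (ℓ : ℤ) - 2 - 2 * (j : ℤ) + t j
            then (-1 : ℤ) else 0)
          + (if t i = t j ∧ (ℓ : ℤ) - 2 - 2 * (i : ℤ) + t i = (ℓ : ℤ) - 2 - 2 * (j : ℤ) + t j
            then (1 : ℤ) else 0))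
        = (if (i : ℤ) = (j : ℤ) + 1 ∧ t i = t j + 1 then (-1 : ℤ) else 0)
          + (if i = j then (1 : ℤ) else 0) := by
      intro i
      congr 1
      · exact if_congr (by omega) rfl rfl
      · refine if_congr ?_ rfl rfl
        constructor
        · rintro ⟨h1, h2⟩
          exact Fin.ext (by omega)
        · rintro rfl
          exact ⟨rfl, rfl⟩
    have hu' : ∀ i : Fin ℓ,
        ((if u i - 1 = t j ∧ (ℓ : ℤ) - 1 - 2 * (i : ℤ) + u i = (ℓ : ℤ) - 2 - 2 * (j : ℤ) + t j
            then (-1 : ℤ) else 0)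
          + (if u i = t j ∧ (ℓ : ℤ) - 2 - 2 * (i : ℤ) + u i = (ℓ : ℤ) - 2 - 2 * (j : ℤ) + t j
            then (1 : ℤ) else 0))
        = (if (i : ℤ) = (j : ℤ) + 1 ∧ u i = t j + 1 then (-1 : ℤ) else 0)
          + (if i = j then (if u i = t j then (1 : ℤ) else 0) else 0) := by
      intro i
      congr 1
      · exact if_congr (by omega) rfl rfl
      · rw [← ite_and]
        refine if_congr ?_ rfl rfl
        rw [Fin.ext_iff, ← Nat.cast_inj (R := ℤ)]
        constructor
        · rintro ⟨h1, h2⟩; constructor <;> omega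
        · rintro ⟨h1, h2⟩; constructor <;> omega
    rw [Finset.sum_congr rfl fun i _ => ht' i, Finset.sum_congr rfl fun i _ => hu' i] at hp
    rw [Finset.sum_add_distrib, Finset.sum_add_distrib] at hp
    have hS : (∑ i : Fin ℓ, if (i : ℤ) = (j : ℤ) + 1 ∧ t i = t j + 1 then (-1 : ℤ) else 0)
        = ∑ i : Fin ℓ, if (i : ℤ) = (j : ℤ) + 1 ∧ u i = t j + 1 then (-1 : ℤ) else 0 := by
      refine Finset.sum_congr rfl fun i _ => ?_
      by_cases hij : (i : ℤ) = (j : ℤ) + 1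
      · have hlt : j < i := by rw [Fin.lt_def]; omega
        rw [IH i hlt]
      · simp [hij]
    rw [hS] at hp
    simp only [Finset.sum_ite_eq' Finset.univ, Finset.mem_univ, if_true] at hp
    by_cases huj : u j = t j
    · exact huj.symm
    · rw [if_neg huj] at hp; omega
  -- downward strong induction
  have H : ∀ n : ℕ, ∀ j : Fin ℓ, ℓ ≤ (j : ℕ) + n + 1 → t j = u j := by
    intro n
    induction n with
    | zero =>
      intro j hj
      refine key j fun k hk => absurd k.isLt (by rw [Fin.lt_def] at hk; omega)
    | succ n ih =>
      intro j hj
      refine key j fun k hk => ih k (by rw [Fin.lt_def] at hk; omega)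
  funext j
  exact H ℓ j (by omega)

/-- For `q` not a root of unity and `a ∈ ℂ*`, the assignment `T ↦ m_T` on the set
`T_{[1,ℓ]}` of strictly increasing `ℓ`-tuples of integers is injective: distinct
tuples give distinct monomials. -/
theorem mMon_injective (q a : ℂ) (hq0 : q ≠ 0) (hq : ∀ n : ℕ, 0 < n → q ^ n ≠ 1)
    (ha : a ≠ 0) (ℓ : ℕ) (hl : 1 ≤ ℓ) (t u : Fin ℓ → ℤ)
    (ht : StrictMono t) (hu : StrictMono u)
    (h : mMon q a ℓ t = mMon q a ℓ u) : t = u := by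
  have hzpow : ∀ m n : ℤ, q ^ m = q ^ n → m = n := by
    have key : ∀ m n : ℤ, m < n → q ^ m ≠ q ^ n := by
      intro m n hmn heq
      have h1 : q ^ (n - m) = 1 := by
        rw [zpow_sub₀ hq0, ← heq, div_self (zpow_ne_zero _ hq0)]
      have h2 : (0 : ℤ) < n - m := by omega
      have h3 : q ^ (n - m).toNat = 1 := by
        rwa [← zpow_natCast, Int.toNat_of_nonneg h2.le]
      exact hq _ (by omega) h3
    intro m n hmn
    rcases lt_trichotomy m n with hc | hc | hc
    · exact absurd hmn (key m n hc)
    · exact hc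
    · exact absurd hmn.symm (key n m hc)
  have hf : Function.Injective (fun p : ℤ × ℤ => ((p.1, a * q ^ p.2) : ℤ × ℂ)) := by
    intro p1 p2 hp
    simp only [Prod.mk.injEq] at hp
    exact Prod.ext hp.1 (hzpow _ _ (mul_left_cancel₀ ha hp.2))
  set F : ℤ × ℤ ↪ ℤ × ℂ := ⟨_, hf⟩ with hF
  have hembM : ∀ v : Fin ℓ → ℤ, mMon q a ℓ v = Finsupp.embDomain F (MZ ℓ v) := by
    intro v
    have hsum : ∀ g : Fin ℓ → ((ℤ × ℤ) →₀ ℤ),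
        Finsupp.embDomain F (∑ i : Fin ℓ, g i) = ∑ i : Fin ℓ, Finsupp.embDomain F (g i) :=
      fun g => map_sum (Finsupp.embDomain.addMonoidHom F) g Finset.univ
    rw [mMon, MZ, hsum]
    refine Finset.sum_congr rfl fun i _ => ?_
    show boxMon q (v i) _ = Finsupp.embDomain F _
    rw [Finsupp.embDomain_add, Finsupp.embDomain_single, Finsupp.embDomain_single, boxMon]
    have e1 : F (v i - 1, (ℓ : ℤ) - 1 - 2 * (i : ℤ) + v i)
        = (v i - 1, a * q ^ ((ℓ : ℤ) + 1 - 2 * ((i : ℤ) + 1)) * q ^ (v i)) := by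
      refine Prod.ext rfl ?_
      show a * q ^ ((ℓ : ℤ) - 1 - 2 * (i : ℤ) + v i) = _
      rw [mul_assoc, ← zpow_add₀ hq0]
      congr 1
      ring
    have e2 : F (v i, (ℓ : ℤ) - 2 - 2 * (i : ℤ) + v i)
        = (v i, a * q ^ ((ℓ : ℤ) + 1 - 2 * ((i : ℤ) + 1)) * q ^ (v i - 1)) := by
      refine Prod.ext rfl ?_
      show a * q ^ ((ℓ : ℤ) - 2 - 2 * (i : ℤ) + v i) = _
      rw [mul_assoc, ← zpow_add₀ hq0]
      congr 1
      ring
    rw [e1, e2]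
  rw [hembM t, hembM u] at h
  exact MZ_injective ℓ t u (Finsupp.embDomain_injective F h)
end
end

section
/- Fix ℓ,k ≥ 1. In the rectangular crystal T_{[1,ℓ]×[1,k]}, the tableau T^e with T^e_{i,j} = i is extremal of weight kΛ_ℓ − kΛ_0: for any finite sequence of string operators S_{i_1}, …, S_{i_m} applied to T^e, the resulting tableau is i-extremal for every i (either ẽ_i or f̃_i annihilates it after the appropriate power), and the resulting tableaux are exactly those with constant rows. -/
attribute [local instance] Classical.propDecidable

noncomputable section

namespace TeAux

open Finset

variable {ℓ k : ℕ}

def constT (ℓ k : ℕ) (g : Fin ℓ → ℤ) : Fin ℓ → Fin k → ℤ := fun r _ => g r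

lemma card_fiber (g : Fin ℓ → ℤ) (hg : Function.Injective g) (i : ℤ) :
    (Finset.univ.filter (fun r => g r = i)).card = if ∃ r, g r = i then 1 else 0 := by
  split_ifs with h
  · obtain ⟨r, hr⟩ := h
    have : Finset.univ.filter (fun r' => g r' = i) = {r} := by
      ext r'
      simp only [Finset.mem_filter, Finset.mem_univ, true_and, Finset.mem_singleton]
      exact ⟨fun h' => hg (h'.trans hr.symm), fun h' => h' ▸ hr⟩
    simp [this]
  · rw [Finset.card_eq_zero, Finset.filter_eq_empty_iff]
    push_neg at h
    intro r _
    exact h r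

lemma prod_filter (g : Fin ℓ → ℤ) (i : ℤ) :
    (Finset.univ.filter (fun rc : Fin ℓ × Fin k => constT ℓ k g rc.1 rc.2 = i)) =
      (Finset.univ.filter (fun r => g r = i)) ×ˢ (Finset.univ : Finset (Fin k)) := by
  ext ⟨r, c⟩
  simp only [Finset.mem_filter, Finset.mem_product, Finset.mem_univ, true_and, and_true, constT]
  exact ⟨fun h => (Finset.mem_filter.1 h).2, fun h => Finset.mem_filter.2 ⟨Finset.mem_univ _, h⟩⟩

lemma wt_const (g : Fin ℓ → ℤ) (hg : Function.Injective g) (i : ℤ) :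
    wtPair i (constT ℓ k g) =
      (k : ℤ) * ((if ∃ r, g r = i then 1 else 0) - (if ∃ r, g r = i + 1 then 1 else 0)) := by
  unfold wtPair
  rw [prod_filter, prod_filter, Finset.card_product, Finset.card_product,
    card_fiber g hg i, card_fiber g hg (i + 1)]
  simp only [Finset.card_univ, Fintype.card_fin]
  split_ifs <;> push_cast <;> ring

lemma fOp_eq_none {i : ℤ} {T : Fin ℓ → Fin k → ℤ} (h : ∀ c, ¬ colPlus i T c) :
    fOp i T = none := by
  have hne : ¬ (Finset.univ.filter (fun c => fCand i T c)).Nonempty := by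
    rw [Finset.not_nonempty_iff_eq_empty, Finset.filter_eq_empty_iff]
    exact fun c _ hc => h c hc.1
  simp [fOp, hne]

lemma eOp_eq_none {i : ℤ} {T : Fin ℓ → Fin k → ℤ} (h : ∀ c, ¬ colMinus i T c) :
    eOp i T = none := by
  have hne : ¬ (Finset.univ.filter (fun c => eCand i T c)).Nonempty := by
    rw [Finset.not_nonempty_iff_eq_empty, Finset.filter_eq_empty_iff]
    exact fun c _ hc => h c hc.1
  simp [eOp, hne]

/-! ### The f-direction -/

def mixF (ℓ k : ℕ) (g : Fin ℓ → ℤ) (r0 : Fin ℓ) (i : ℤ) (m : ℕ) : Fin ℓ → Fin k → ℤ :=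
  fun r c => if r = r0 ∧ (c : ℕ) < m then i + 1 else g r

section F

variable {g : Fin ℓ → ℤ} {r0 : Fin ℓ} {i : ℤ} {m : ℕ}
variable (hg : Function.Injective g) (h0 : g r0 = i) (hni : ∀ r, g r ≠ i + 1)

include hg h0 hni

lemma colPlus_mixF (c : Fin k) : colPlus i (mixF ℓ k g r0 i m) c ↔ m ≤ (c : ℕ) := by
  constructor
  · rintro ⟨⟨r, hr⟩, -⟩
    by_contra hm
    push_neg at hm
    rw [show mixF ℓ k g r0 i m r c = if r = r0 ∧ (c : ℕ) < m then i + 1 else g r from rfl] at hr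
    by_cases hr0 : r = r0
    · rw [if_pos ⟨hr0, hm⟩] at hr; omega
    · rw [if_neg (fun hh => hr0 hh.1)] at hr
      exact hr0 (hg (hr.trans h0.symm))
  · intro hm
    refine ⟨⟨r0, ?_⟩, fun r => ?_⟩
    · show (if r0 = r0 ∧ (c : ℕ) < m then i + 1 else g r0) = i
      rw [if_neg (fun hh => absurd hh.2 (by omega))]
      exact h0
    · show (if r = r0 ∧ (c : ℕ) < m then i + 1 else g r) ≠ i + 1
      split_ifs with h
      · exact absurd h.2 (by omega)
      · exact hni r

lemma colMinus_mixF (c : Fin k) : colMinus i (mixF ℓ k g r0 i m) c ↔ (c : ℕ) < m := by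
  constructor
  · rintro ⟨⟨r, hr⟩, -⟩
    by_contra hm
    rw [show mixF ℓ k g r0 i m r c = if r = r0 ∧ (c : ℕ) < m then i + 1 else g r from rfl] at hr
    split_ifs at hr with h
    · exact hm h.2
    · exact hni r hr
  · intro hm
    refine ⟨⟨r0, ?_⟩, fun r => ?_⟩
    · show (if r0 = r0 ∧ (c : ℕ) < m then i + 1 else g r0) = i + 1
      rw [if_pos ⟨rfl, hm⟩]
    · show (if r = r0 ∧ (c : ℕ) < m then i + 1 else g r) ≠ i
      split_ifs with h
      · omega
      · intro he
        exact h ⟨hg (he.trans h0.symm), hm⟩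

lemma fCand_mixF (c : Fin k) : fCand i (mixF ℓ k g r0 i m) c ↔ m ≤ (c : ℕ) := by
  constructor
  · exact fun hc => (colPlus_mixF hg h0 hni c).1 hc.1
  · intro hm
    refine ⟨(colPlus_mixF hg h0 hni c).2 hm, fun c' _ => ?_⟩
    have hemp : (Finset.Ioc c c').filter (fun d => colMinus i (mixF ℓ k g r0 i m) d) = ∅ := by
      rw [Finset.filter_eq_empty_iff]
      intro d hd
      rw [colMinus_mixF hg h0 hni d]
      have h1 : c < d := (Finset.mem_Ioc.1 hd).1
      have h2 : (c : ℕ) < (d : ℕ) := h1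
      omega
    rw [hemp]
    simp

lemma fOp_mixF (hm : m < k) :
    fOp i (mixF ℓ k g r0 i m) = some (mixF ℓ k g r0 i (m + 1)) := by
  have hfe : Finset.univ.filter (fun c => fCand i (mixF ℓ k g r0 i m) c) =
      Finset.univ.filter (fun c : Fin k => m ≤ (c : ℕ)) :=
    Finset.filter_congr (fun c _ => by rw [fCand_mixF hg h0 hni c])
  have hmem : (⟨m, hm⟩ : Fin k) ∈
      Finset.univ.filter (fun c => fCand i (mixF ℓ k g r0 i m) c) := by
    rw [hfe]; simp
  have hne : (Finset.univ.filter (fun c => fCand i (mixF ℓ k g r0 i m) c)).Nonempty :=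
    ⟨_, hmem⟩
  have hmin : (Finset.univ.filter (fun c => fCand i (mixF ℓ k g r0 i m) c)).min' hne
      = ⟨m, hm⟩ := by
    refine le_antisymm (Finset.min'_le _ _ hmem) (Finset.le_min' _ _ _ fun c hc => ?_)
    rw [hfe, Finset.mem_filter] at hc
    exact hc.2
  rw [fOp, dif_pos hne]
  congr 1
  funext r c
  rw [hmin]
  by_cases hr : r = r0
  · subst hr
    rcases lt_trichotomy (c : ℕ) m with h | h | h
    · have h2 : (c : ℕ) < m + 1 := by omega
      simp [mixF, h, h2, show (i : ℤ) + 1 ≠ i by omega]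
    · have hc : c = ⟨m, hm⟩ := Fin.ext h
      subst hc
      simp [mixF, h0, lt_self_iff_false, Nat.lt_succ_self]
    · have hc : c ≠ (⟨m, hm⟩ : Fin k) := by
        intro hh
        rw [hh] at h
        simp at h
      simp [mixF, hc, show ¬ ((c : ℕ) < m) by omega, show ¬ ((c : ℕ) < m + 1) by omega]
  · have hgr : g r ≠ i := fun he => hr (hg (he.trans h0.symm))
    simp [mixF, hr, hgr]

lemma iter_fOp (n : ℕ) : ∀ m', m' + n ≤ k →
    iterOpt (fOp i) n (mixF ℓ k g r0 i m') = some (mixF ℓ k g r0 i (m' + n)) := by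
  induction n with
  | zero => intro m' _; simp [iterOpt]
  | succ n ih =>
    intro m' hmk
    rw [iterOpt, fOp_mixF (k := k) (m := m') hg h0 hni (by omega), Option.bind_some]
    have := ih (m' + 1) (by omega)
    rw [show m' + (n + 1) = (m' + 1) + n by omega]
    exact this

omit hg h0 hni

lemma mixF_zero : mixF ℓ k g r0 i 0 = constT ℓ k g := by
  funext r c
  show (if r = r0 ∧ (c : ℕ) < 0 then i + 1 else g r) = g r
  rw [if_neg (fun hh => absurd hh.2 (by omega))]

lemma mixF_k : mixF ℓ k g r0 i k = constT ℓ k (Function.update g r0 (i + 1)) := by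
  funext r c
  show (if r = r0 ∧ (c : ℕ) < k then i + 1 else g r) = Function.update g r0 (i + 1) r
  rw [Function.update_apply]
  have hck := c.isLt
  by_cases hr : r = r0
  · rw [if_pos ⟨hr, hck⟩, if_pos hr]
  · rw [if_neg (fun hh => hr hh.1), if_neg hr]

include hg h0 hni

lemma SOp_up : SOp i (constT ℓ k g) = some (constT ℓ k (Function.update g r0 (i + 1))) := by
  have hw : wtPair i (constT ℓ k g) = k := by
    rw [wt_const g hg, if_pos ⟨r0, h0⟩, if_neg (by push_neg; exact hni)]
    ring
  have hpos : (0 : ℤ) ≤ wtPair i (constT ℓ k g) := by rw [hw]; exact_mod_cast Nat.zero_le k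
  rw [SOp, if_pos hpos, hw, Int.toNat_natCast, ← mixF_zero (r0 := r0) (i := i)]
  have hi := iter_fOp (k := k) hg h0 hni k 0 (by omega)
  rw [Nat.zero_add] at hi
  rw [hi, mixF_k]

end F

/-! ### The e-direction -/

def mixE (ℓ k : ℕ) (g : Fin ℓ → ℤ) (r0 : Fin ℓ) (i : ℤ) (m : ℕ) : Fin ℓ → Fin k → ℤ :=
  fun r c => if r = r0 ∧ k ≤ (c : ℕ) + m then i else g r

section E

variable {g : Fin ℓ → ℤ} {r0 : Fin ℓ} {i : ℤ} {m : ℕ}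
variable (hg : Function.Injective g) (h0 : g r0 = i + 1) (hni : ∀ r, g r ≠ i)

include hg h0 hni

lemma colMinus_mixE (c : Fin k) : colMinus i (mixE ℓ k g r0 i m) c ↔ (c : ℕ) + m < k := by
  constructor
  · rintro ⟨⟨r, hr⟩, -⟩
    by_contra hm
    push_neg at hm
    rw [show mixE ℓ k g r0 i m r c = if r = r0 ∧ k ≤ (c : ℕ) + m then i else g r from rfl] at hr
    by_cases hr0 : r = r0
    · rw [if_pos ⟨hr0, hm⟩] at hr; omega
    · rw [if_neg (fun hh => hr0 hh.1)] at hr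
      exact hr0 (hg (hr.trans h0.symm))
  · intro hm
    refine ⟨⟨r0, ?_⟩, fun r => ?_⟩
    · show (if r0 = r0 ∧ k ≤ (c : ℕ) + m then i else g r0) = i + 1
      rw [if_neg (fun hh => absurd hh.2 (by omega))]
      exact h0
    · show (if r = r0 ∧ k ≤ (c : ℕ) + m then i else g r) ≠ i
      split_ifs with h
      · exact absurd h.2 (by omega)
      · exact hni r

lemma colPlus_mixE (c : Fin k) : colPlus i (mixE ℓ k g r0 i m) c ↔ k ≤ (c : ℕ) + m := by
  constructor
  · rintro ⟨⟨r, hr⟩, -⟩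
    by_contra hm
    rw [show mixE ℓ k g r0 i m r c = if r = r0 ∧ k ≤ (c : ℕ) + m then i else g r from rfl] at hr
    split_ifs at hr with h
    · exact hm h.2
    · exact hni r hr
  · intro hm
    refine ⟨⟨r0, ?_⟩, fun r => ?_⟩
    · show (if r0 = r0 ∧ k ≤ (c : ℕ) + m then i else g r0) = i
      rw [if_pos ⟨rfl, hm⟩]
    · show (if r = r0 ∧ k ≤ (c : ℕ) + m then i else g r) ≠ i + 1
      split_ifs with h
      · omega
      · intro he
        exact h ⟨hg (he.trans h0.symm), hm⟩

lemma eCand_mixE (c : Fin k) : eCand i (mixE ℓ k g r0 i m) c ↔ (c : ℕ) + m < k := by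
  constructor
  · exact fun hc => (colMinus_mixE hg h0 hni c).1 hc.1
  · intro hm
    refine ⟨(colMinus_mixE hg h0 hni c).2 hm, fun c' _ => ?_⟩
    have hemp : (Finset.Ico c' c).filter (fun d => colPlus i (mixE ℓ k g r0 i m) d) = ∅ := by
      rw [Finset.filter_eq_empty_iff]
      intro d hd
      rw [colPlus_mixE hg h0 hni d]
      have h1 : d < c := (Finset.mem_Ico.1 hd).2
      have h2 : (d : ℕ) < (c : ℕ) := h1
      omega
    rw [hemp]
    simp

lemma eOp_mixE (hm : m < k) :
    eOp i (mixE ℓ k g r0 i m) = some (mixE ℓ k g r0 i (m + 1)) := by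
  have hfe : Finset.univ.filter (fun c => eCand i (mixE ℓ k g r0 i m) c) =
      Finset.univ.filter (fun c : Fin k => (c : ℕ) + m < k) :=
    Finset.filter_congr (fun c _ => by rw [eCand_mixE hg h0 hni c])
  have hmem : (⟨k - 1 - m, by omega⟩ : Fin k) ∈
      Finset.univ.filter (fun c => eCand i (mixE ℓ k g r0 i m) c) := by
    rw [hfe]
    simp only [Finset.mem_filter, Finset.mem_univ, true_and]
    omega
  have hne : (Finset.univ.filter (fun c => eCand i (mixE ℓ k g r0 i m) c)).Nonempty :=
    ⟨_, hmem⟩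
  have hmax : (Finset.univ.filter (fun c => eCand i (mixE ℓ k g r0 i m) c)).max' hne
      = ⟨k - 1 - m, by omega⟩ := by
    refine le_antisymm (Finset.max'_le _ _ _ fun c hc => ?_) (Finset.le_max' _ _ hmem)
    rw [hfe, Finset.mem_filter] at hc
    show (c : ℕ) ≤ k - 1 - m
    have := hc.2
    omega
  rw [eOp, dif_pos hne]
  congr 1
  funext r c
  rw [hmax]
  by_cases hr : r = r0
  · subst hr
    rcases lt_trichotomy (c : ℕ) (k - 1 - m) with h | h | h
    · have hc : c ≠ (⟨k - 1 - m, by omega⟩ : Fin k) := by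
        intro hh
        rw [hh] at h
        simp at h
      simp [mixE, hc, show ¬ (k ≤ (c : ℕ) + m) by omega, show ¬ (k ≤ (c : ℕ) + (m + 1)) by omega]
    · have hc : c = (⟨k - 1 - m, by omega⟩ : Fin k) := Fin.ext (by simp [h])
      rw [hc]
      simp [mixE, h0, show ¬ (k ≤ k - 1 - m + m) by omega, show k ≤ k - 1 - m + (m + 1) by omega]
    · simp [mixE, show k ≤ (c : ℕ) + m by omega, show k ≤ (c : ℕ) + (m + 1) by omega,
        show (i : ℤ) ≠ i + 1 by omega]
  · have hgr : g r ≠ i + 1 := fun he => hr (hg (he.trans h0.symm))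
    simp [mixE, hr, hgr]

lemma iter_eOp (n : ℕ) : ∀ m', m' + n ≤ k →
    iterOpt (eOp i) n (mixE ℓ k g r0 i m') = some (mixE ℓ k g r0 i (m' + n)) := by
  induction n with
  | zero => intro m' _; simp [iterOpt]
  | succ n ih =>
    intro m' hmk
    rw [iterOpt, eOp_mixE (k := k) (m := m') hg h0 hni (by omega), Option.bind_some]
    have := ih (m' + 1) (by omega)
    rw [show m' + (n + 1) = (m' + 1) + n by omega]
    exact this

omit hg h0 hni

lemma mixE_zero : mixE ℓ k g r0 i 0 = constT ℓ k g := by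
  funext r c
  have hck := c.isLt
  show (if r = r0 ∧ k ≤ (c : ℕ) + 0 then i else g r) = g r
  rw [if_neg (fun hh => absurd hh.2 (by omega))]

lemma mixE_k : mixE ℓ k g r0 i k = constT ℓ k (Function.update g r0 i) := by
  funext r c
  show (if r = r0 ∧ k ≤ (c : ℕ) + k then i else g r) = Function.update g r0 i r
  rw [Function.update_apply]
  by_cases hr : r = r0
  · rw [if_pos ⟨hr, by omega⟩, if_pos hr]
  · rw [if_neg (fun hh => hr hh.1), if_neg hr]

include hg h0 hni

lemma SOp_down (hk : 1 ≤ k) :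
    SOp i (constT ℓ k g) = some (constT ℓ k (Function.update g r0 i)) := by
  have hw : wtPair i (constT ℓ k g) = -(k : ℤ) := by
    rw [wt_const g hg, if_neg (by push_neg; exact hni), if_pos ⟨r0, h0⟩]
    ring
  have hneg : ¬ ((0 : ℤ) ≤ wtPair i (constT ℓ k g)) := by rw [hw]; omega
  rw [SOp, if_neg hneg, hw, neg_neg, Int.toNat_natCast, ← mixE_zero (r0 := r0) (i := i)]
  have hi := iter_eOp (k := k) hg h0 hni k 0 (by omega)
  rw [Nat.zero_add] at hi
  rw [hi, mixE_k]

end E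

/-! ### String operators preserve constant-row strictly monotone tableaux -/

lemma update_strictMono_up {g : Fin ℓ → ℤ} {r0 : Fin ℓ} {i : ℤ}
    (hg : StrictMono g) (h0 : g r0 = i) (hni : ∀ r, g r ≠ i + 1) :
    StrictMono (Function.update g r0 (i + 1)) := by
  intro a b hab
  rw [Function.update_apply, Function.update_apply]
  by_cases ha : a = r0
  · by_cases hb : b = r0
    · exact absurd (ha.trans hb.symm) hab.ne
    · rw [if_pos ha, if_neg hb]
      have h1 := hg hab
      rw [ha, h0] at h1
      have h2 := hni b
      omega
  · by_cases hb : b = r0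
    · rw [if_neg ha, if_pos hb]
      have h1 := hg hab
      rw [hb, h0] at h1
      omega
    · rw [if_neg ha, if_neg hb]
      exact hg hab

lemma update_strictMono_down {g : Fin ℓ → ℤ} {r0 : Fin ℓ} {i : ℤ}
    (hg : StrictMono g) (h0 : g r0 = i + 1) (hni : ∀ r, g r ≠ i) :
    StrictMono (Function.update g r0 i) := by
  intro a b hab
  rw [Function.update_apply, Function.update_apply]
  by_cases ha : a = r0
  · by_cases hb : b = r0
    · exact absurd (ha.trans hb.symm) hab.ne
    · rw [if_pos ha, if_neg hb]
      have h1 := hg hab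
      rw [ha, h0] at h1
      omega
  · by_cases hb : b = r0
    · rw [if_neg ha, if_pos hb]
      have h1 := hg hab
      rw [hb, h0] at h1
      have h2 := hni a
      omega
    · rw [if_neg ha, if_neg hb]
      exact hg hab

lemma step_const {g : Fin ℓ → ℤ} (hg : StrictMono g) {i : ℤ} {B : Fin ℓ → Fin k → ℤ}
    (h : SOp i (constT ℓ k g) = some B) :
    ∃ g', StrictMono g' ∧ B = constT ℓ k g' := by
  by_cases ha : ∃ r, g r = i
  · by_cases hb : ∃ r, g r = i + 1
    · have hw : wtPair i (constT ℓ k g) = 0 := by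
        rw [wt_const g hg.injective, if_pos ha, if_pos hb]; ring
      rw [SOp, if_pos (le_of_eq hw.symm), hw] at h
      simp only [Int.toNat_zero, iterOpt, Option.some_inj] at h
      exact ⟨g, hg, h.symm⟩
    · push_neg at hb
      obtain ⟨r0, h0⟩ := ha
      rw [SOp_up hg.injective h0 hb] at h
      exact ⟨_, update_strictMono_up hg h0 hb, (Option.some_inj.1 h).symm⟩
  · by_cases hb : ∃ r, g r = i + 1
    · push_neg at ha
      obtain ⟨r0, h0⟩ := hb
      by_cases hk : 1 ≤ k
      · rw [SOp_down hg.injective h0 ha hk] at h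
        exact ⟨_, update_strictMono_down hg h0 ha, (Option.some_inj.1 h).symm⟩
      · refine ⟨g, hg, ?_⟩
        funext r c
        exact absurd c.isLt (by omega)
    · have hw : wtPair i (constT ℓ k g) = 0 := by
        rw [wt_const g hg.injective, if_neg ha, if_neg hb]; ring
      rw [SOp, if_pos (le_of_eq hw.symm), hw] at h
      simp only [Int.toNat_zero, iterOpt, Option.some_inj] at h
      exact ⟨g, hg, h.symm⟩

lemma const_extremal (g : Fin ℓ → ℤ) (i : ℤ) :
    eOp i (constT ℓ k g) = none ∨ fOp i (constT ℓ k g) = none := by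
  by_cases ha : ∃ r, g r = i
  · left
    apply eOp_eq_none
    rintro c ⟨-, hmin⟩
    obtain ⟨r, hr⟩ := ha
    exact hmin r hr
  · right
    apply fOp_eq_none
    rintro c ⟨⟨r, hr⟩, -⟩
    exact ha ⟨r, hr⟩

/-! ### Reachability -/

lemma reach (hk : 1 ≤ k) (t : Fin ℓ → ℤ) (ht : StrictMono t) :
    ∀ N (s : Fin ℓ → ℤ), StrictMono s → (∑ r, (t r - s r).natAbs) = N →
      Relation.ReflTransGen (fun A B => ∃ i : ℤ, SOp i A = some B)
        (constT ℓ k s) (constT ℓ k t) := by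
  intro N
  induction N using Nat.strong_induction_on with
  | _ N ih =>
    intro s hs hN
    by_cases hst : s = t
    · subst hst
      exact Relation.ReflTransGen.refl
    · have hsum : ∀ (u : Fin ℓ → ℤ) (r : Fin ℓ),
          (∑ r', (t r' - u r').natAbs) =
            (t r - u r).natAbs + ∑ r' ∈ Finset.univ.erase r, (t r' - u r').natAbs :=
        fun u r => (Finset.add_sum_erase Finset.univ _ (Finset.mem_univ r)).symm
      by_cases hup : ∃ r, s r < t r
      · have hAne : (Finset.univ.filter (fun r => s r < t r)).Nonempty := by
          obtain ⟨r, hr⟩ := hup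
          exact ⟨r, by simp [hr]⟩
        set r := (Finset.univ.filter (fun r => s r < t r)).max' hAne with hrdef
        have hrlt : s r < t r := by
          have hmm := (Finset.univ.filter (fun r => s r < t r)).max'_mem hAne
          rw [Finset.mem_filter] at hmm
          exact hmm.2
        have hmax : ∀ r', r < r' → t r' ≤ s r' := by
          intro r' hr'
          by_contra hcon
          push_neg at hcon
          have : r' ≤ r := Finset.le_max' _ r' (by simp [hcon])
          exact absurd hr' (not_lt.2 this)
        have hni : ∀ r', s r' ≠ s r + 1 := by
          intro r' he
          rcases lt_trichotomy r' r with h | h | h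
          · have := hs h; omega
          · subst h; omega
          · have h1 := hmax r' h
            have h2 := ht h
            omega
        have hmove : SOp (s r) (constT ℓ k s) =
            some (constT ℓ k (Function.update s r (s r + 1))) :=
          SOp_up hs.injective rfl hni
        have hs' : StrictMono (Function.update s r (s r + 1)) :=
          update_strictMono_up hs rfl hni
        have hsum' : (∑ r', (t r' - Function.update s r (s r + 1) r').natAbs) = N - 1 := by
          rw [hsum _ r, Function.update_self]
          rw [hsum s r] at hN
          have herase : ∑ r' ∈ Finset.univ.erase r,
              (t r' - Function.update s r (s r + 1) r').natAbs =
              ∑ r' ∈ Finset.univ.erase r, (t r' - s r').natAbs := by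
            refine Finset.sum_congr rfl fun r' hr' => ?_
            rw [Function.update_of_ne (Finset.ne_of_mem_erase hr')]
          rw [herase]
          omega
        have hNpos : 1 ≤ N := by
          rw [hsum s r] at hN
          omega
        exact Relation.ReflTransGen.head ⟨s r, hmove⟩
          (ih (N - 1) (by omega) _ hs' hsum')
      · push_neg at hup
        have hdn : ∃ r, t r < s r := by
          by_contra hcon
          push_neg at hcon
          exact hst (funext fun r => le_antisymm (hcon r) (hup r))
        have hAne : (Finset.univ.filter (fun r => t r < s r)).Nonempty := by
          obtain ⟨r, hr⟩ := hdn
          exact ⟨r, by simp [hr]⟩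
        set r := (Finset.univ.filter (fun r => t r < s r)).min' hAne with hrdef
        have hrlt : t r < s r := by
          have hmm := (Finset.univ.filter (fun r => t r < s r)).min'_mem hAne
          rw [Finset.mem_filter] at hmm
          exact hmm.2
        have hmin : ∀ r', r' < r → s r' = t r' := by
          intro r' hr'
          by_contra hcon
          have h1 : t r' < s r' := lt_of_le_of_ne (hup r') (Ne.symm hcon)
          have : r ≤ r' := Finset.min'_le _ r' (by simp [h1])
          exact absurd hr' (not_lt.2 this)
        have hni : ∀ r', s r' ≠ s r - 1 := by
          intro r' he
          rcases lt_trichotomy r' r with h | h | h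
          · have h1 := hmin r' h
            have h2 := ht h
            omega
          · subst h; omega
          · have := hs h; omega
        have h0 : s r = (s r - 1) + 1 := by ring
        have hmove : SOp (s r - 1) (constT ℓ k s) =
            some (constT ℓ k (Function.update s r (s r - 1))) :=
          SOp_down hs.injective h0 hni hk
        have hs' : StrictMono (Function.update s r (s r - 1)) :=
          update_strictMono_down hs h0 hni
        have hsum' : (∑ r', (t r' - Function.update s r (s r - 1) r').natAbs) = N - 1 := by
          rw [hsum _ r, Function.update_self]
          rw [hsum s r] at hN
          have herase : ∑ r' ∈ Finset.univ.erase r,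
              (t r' - Function.update s r (s r - 1) r').natAbs =
              ∑ r' ∈ Finset.univ.erase r, (t r' - s r').natAbs := by
            refine Finset.sum_congr rfl fun r' hr' => ?_
            rw [Function.update_of_ne (Finset.ne_of_mem_erase hr')]
          rw [herase]
          omega
        have hNpos : 1 ≤ N := by
          rw [hsum s r] at hN
          omega
        exact Relation.ReflTransGen.head ⟨s r - 1, hmove⟩
          (ih (N - 1) (by omega) _ hs' hsum')

lemma reach_const {T : Fin ℓ → Fin k → ℤ}
    (hRT : Relation.ReflTransGen (fun A B => ∃ i : ℤ, SOp i A = some B) (Te ℓ k) T) :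
    ∃ g, StrictMono g ∧ T = constT ℓ k g := by
  induction hRT with
  | refl =>
    refine ⟨fun r => (r : ℤ) + 1, fun a b hab => ?_, rfl⟩
    simp only [add_lt_add_iff_right]
    exact_mod_cast hab
  | tail _ hbc ih =>
    obtain ⟨g, hg, rfl⟩ := ih
    obtain ⟨i, hi⟩ := hbc
    exact step_const hg hi

end TeAux


/-- The tableau `T^e` (with `T_{i,j} = i`) in the rectangular crystal
`T_{[1,ℓ]×[1,k]}` is extremal of weight `kΛ_ℓ − kΛ_0`:
its weight pairs with `h_i` as `k δ_{i,ℓ} − k δ_{i,0}`; every tableau obtained from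
`T^e` by a finite sequence of string operators `S_{i_1}, …, S_{i_m}` is
`i`-extremal for every `i` (it is annihilated by `ẽ_i` or by `f̃_i`); and the
tableaux so obtained are exactly the semi-standard tableaux with constant rows. -/
theorem Te_extremal (ℓ k : ℕ) (hl : 1 ≤ ℓ) (hk : 1 ≤ k) :
    (∀ i : ℤ, wtPair i (Te ℓ k) =
      if i = (ℓ : ℤ) then (k : ℤ) else if i = 0 then -(k : ℤ) else 0) ∧
    (∀ T : Fin ℓ → Fin k → ℤ,
      Relation.ReflTransGen (fun A B => ∃ i : ℤ, SOp i A = some B) (Te ℓ k) T →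
        ∀ i : ℤ, eOp i T = none ∨ fOp i T = none) ∧
    (∀ T : Fin ℓ → Fin k → ℤ,
      Relation.ReflTransGen (fun A B => ∃ i : ℤ, SOp i A = some B) (Te ℓ k) T ↔
        ((∀ c : Fin k, StrictMono (fun r => T r c)) ∧
          ∀ (r : Fin ℓ) (c c' : Fin k), T r c = T r c')) := by
  have hmono : StrictMono (fun r : Fin ℓ => (r : ℤ) + 1) := fun a b hab => by
    simp only [add_lt_add_iff_right]
    exact_mod_cast hab
  have hTe : Te ℓ k = TeAux.constT ℓ k (fun r => (r : ℤ) + 1) := rfl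
  refine ⟨?_, ?_, ?_⟩
  · intro i
    rw [hTe, TeAux.wt_const _ hmono.injective]
    have hex : ∀ j : ℤ, (∃ r : Fin ℓ, ((r : ℤ) + 1 : ℤ) = j) ↔ 1 ≤ j ∧ j ≤ ℓ := by
      intro j
      constructor
      · rintro ⟨r, rfl⟩
        have : (r : ℤ) < ℓ := by exact_mod_cast r.isLt
        omega
      · rintro ⟨h1, h2⟩
        refine ⟨⟨(j - 1).toNat, by omega⟩, ?_⟩
        push_cast
        omega
    simp only [hex]
    have hl' : (1 : ℤ) ≤ (ℓ : ℤ) := by exact_mod_cast hl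
    split_ifs <;> omega
  · intro T hRT i
    obtain ⟨g, hg, rfl⟩ := TeAux.reach_const hRT
    exact TeAux.const_extremal g i
  · intro T
    constructor
    · intro hRT
      obtain ⟨g, hg, rfl⟩ := TeAux.reach_const hRT
      exact ⟨fun c => hg, fun r c c' => rfl⟩
    · rintro ⟨hcol, hrow⟩
      have hg : StrictMono (fun r => T r ⟨0, hk⟩) := hcol ⟨0, hk⟩
      have hT : T = TeAux.constT ℓ k (fun r => T r ⟨0, hk⟩) := by
        funext r c
        exact hrow r c ⟨0, hk⟩
      rw [hT, hTe]
      exact TeAux.reach hk _ hg _ _ hmono rfl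
end
end
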